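/- arXiv:1012.4078 — 11 statements merged into one kernel-verified Lean document; each statement's English description precedes it below -/
import Mathlib

section
/- Let U be a nonnegative random variable stochastically lower bounded by a uniform distribution on [0,1], i.e., P(U ≤ u) ≤ u for all u ∈ [0,1]. Let g : [0,∞) → [0,∞) be a non-increasing function and set V = g(U). Then E[1{U ≤ V}/V] ≤ 1, with the convention 0/0 = 0. -/
open MeasureTheory

theorem stmt1 {Ω : Type*} [MeasurableSpace Ω] (μ : Measure Ω) [IsProbabilityMeasure μ]
    (U : Ω → ℝ) (hUmeas : Measurable U) (hUpos : ∀ ω, 0 ≤ U ω)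
    (hU : ∀ u ∈ Set.Icc (0:ℝ) 1, (μ {ω | U ω ≤ u}).toReal ≤ u)
    (g : ℝ → ℝ) (hgpos : ∀ x, 0 ≤ x → 0 ≤ g x)
    (hganti : ∀ x y, 0 ≤ x → x ≤ y → g y ≤ g x) :
    ∫ ω, (if U ω ≤ g (U ω) then (g (U ω))⁻¹ else 0) ∂μ ≤ 1 := by
  classical
  set S : Set ℝ := {x | 0 ≤ x ∧ x ≤ g x} with hSdef
  have h0S : (0:ℝ) ∈ S := ⟨le_rfl, hgpos 0 le_rfl⟩
  have hbdd : BddAbove S := ⟨g 0, fun u hu => hu.2.trans (hganti 0 u le_rfl hu.1)⟩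
  set s := sSup S with hs
  have hs0 : 0 ≤ s := le_csSup hbdd h0S
  have hkey : ∀ ω, U ω ≤ g (U ω) → U ω ≤ s ∧ s ≤ g (U ω) := by
    intro ω hω
    refine ⟨le_csSup hbdd ⟨hUpos ω, hω⟩, csSup_le ⟨0, h0S⟩ ?_⟩
    intro u hu
    rcases le_total u (U ω) with h | h
    · exact h.trans hω
    · exact hu.2.trans (hganti (U ω) u (hUpos ω) h)
  have hfnonneg : ∀ ω, 0 ≤ (if U ω ≤ g (U ω) then (g (U ω))⁻¹ else 0) := by
    intro ω
    split
    · exact inv_nonneg.2 (hgpos _ (hUpos ω))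
    · exact le_rfl
  have hAmeas : ∀ a : ℝ, MeasurableSet {ω | U ω ≤ a} := fun a =>
    hUmeas measurableSet_Iic
  rcases lt_or_ge 1 s with h1 | h1
  · -- s > 1 : integrand ≤ 1 pointwise
    have : ∫ ω, (if U ω ≤ g (U ω) then (g (U ω))⁻¹ else 0) ∂μ ≤ ∫ _ω, (1:ℝ) ∂μ := by
      apply integral_mono_of_nonneg (Filter.Eventually.of_forall hfnonneg)
        (integrable_const 1)
      apply Filter.Eventually.of_forall
      intro ω
      dsimp only
      split
      · next hω =>
          have h2 := (hkey ω hω).2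
          have hg1 : (1:ℝ) ≤ g (U ω) := le_trans h1.le h2
          calc (g (U ω))⁻¹ ≤ (1:ℝ)⁻¹ := by
                apply inv_anti₀ one_pos hg1
            _ = 1 := inv_one
      · exact zero_le_one
    simpa [measure_univ] using this
  rcases eq_or_lt_of_le hs0 with hseq | hspos
  · -- s = 0 : event is contained in {U ≤ 0}, a null set
    have hb : ∀ ω, (if U ω ≤ g (U ω) then (g (U ω))⁻¹ else 0) ≤
        Set.indicator {ω | U ω ≤ (0:ℝ)} (fun _ => (g 0)⁻¹) ω := by
      intro ω
      split
      · next hω =>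
          obtain ⟨hU1, _⟩ := hkey ω hω
          have hU0 : U ω ≤ 0 := by rw [← hseq] at hU1; exact hU1
          have hUeq : U ω = 0 := le_antisymm hU0 (hUpos ω)
          rw [Set.indicator_of_mem (show ω ∈ {ω | U ω ≤ (0:ℝ)} from hU0), hUeq]
      · exact Set.indicator_nonneg (fun _ _ => inv_nonneg.2 (hgpos 0 le_rfl)) ω
    have hI : Integrable (Set.indicator {ω | U ω ≤ (0:ℝ)} (fun _ => (g 0)⁻¹)) μ :=
      (integrable_const _).indicator (hAmeas 0)
    have := integral_mono_of_nonneg (Filter.Eventually.of_forall hfnonneg) hI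
      (Filter.Eventually.of_forall hb)
    refine this.trans ?_
    rw [integral_indicator_const _ (hAmeas 0)]
    have hμ0 : (μ {ω | U ω ≤ (0:ℝ)}).toReal = 0 :=
      le_antisymm (hU 0 ⟨le_rfl, zero_le_one⟩) ENNReal.toReal_nonneg
    rw [measureReal_def, hμ0]
    simp
  · -- 0 < s ≤ 1
    have hb : ∀ ω, (if U ω ≤ g (U ω) then (g (U ω))⁻¹ else 0) ≤
        Set.indicator {ω | U ω ≤ s} (fun _ => s⁻¹) ω := by
      intro ω
      split
      · next hω =>
          obtain ⟨hU1, h2⟩ := hkey ω hω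
          rw [Set.indicator_of_mem (show ω ∈ {ω | U ω ≤ s} from hU1)]
          exact inv_anti₀ hspos h2
      · exact Set.indicator_nonneg (fun _ _ => inv_nonneg.2 hs0) ω
    have hI : Integrable (Set.indicator {ω | U ω ≤ s} (fun _ => s⁻¹)) μ :=
      (integrable_const _).indicator (hAmeas s)
    have hmono := integral_mono_of_nonneg (Filter.Eventually.of_forall hfnonneg) hI
      (Filter.Eventually.of_forall hb)
    refine hmono.trans ?_
    rw [integral_indicator_const _ (hAmeas s), smul_eq_mul]
    have hμ : (μ {ω | U ω ≤ s}).toReal ≤ s := hU s ⟨hs0, h1⟩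
    calc (μ {ω | U ω ≤ s}).toReal * s⁻¹ ≤ s * s⁻¹ := by
          apply mul_le_mul_of_nonneg_right hμ (inv_nonneg.2 hs0)
      _ = 1 := mul_inv_cancel₀ (ne_of_gt hspos)
end

section
/- Let p₁,…,p_m ∈ [0,1] and let Ĝ(u) = (1/m)·#{i : p_i ≤ u} be the empirical c.d.f. Then the set T = {u ∈ [0,1] : Ĝ(u) ≥ u/α} (for α ∈ (0,1)) contains 0, and its supremum t* = max T is attained and satisfies Ĝ(t*) = t*/α; moreover t* ∈ {αk/m : 0 ≤ k ≤ m}. -/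
theorem stmt3 (m : ℕ) (hm : 1 ≤ m) (α : ℝ) (hα : α ∈ Set.Ioo (0:ℝ) 1)
    (p : Fin m → ℝ) (hp : ∀ i, p i ∈ Set.Icc (0:ℝ) 1) :
    (0:ℝ) ∈ {u ∈ Set.Icc (0:ℝ) 1 |
        u / α ≤ ((Finset.univ.filter (fun i => p i ≤ u)).card : ℝ) / m} ∧
    ∃ t ∈ {u ∈ Set.Icc (0:ℝ) 1 |
        u / α ≤ ((Finset.univ.filter (fun i => p i ≤ u)).card : ℝ) / m},
      (∀ u ∈ {u ∈ Set.Icc (0:ℝ) 1 |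
          u / α ≤ ((Finset.univ.filter (fun i => p i ≤ u)).card : ℝ) / m}, u ≤ t) ∧
      ((Finset.univ.filter (fun i => p i ≤ t)).card : ℝ) / m = t / α ∧
      ∃ k ≤ m, t = α * k / m := by
  classical
  obtain ⟨hα0, hα1⟩ := hα
  have hm0 : (0:ℝ) < m := by exact_mod_cast hm
  set C : ℝ → ℕ := fun u => (Finset.univ.filter (fun i => p i ≤ u)).card with hC
  have hCmono : ∀ {u v : ℝ}, u ≤ v → C u ≤ C v := by
    intro u v huv
    apply Finset.card_le_card
    intro i hi
    simp only [Finset.mem_filter, Finset.mem_univ, true_and] at hi ⊢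
    linarith
  have hCle : ∀ u, C u ≤ m := fun u => by
    simpa using Finset.card_le_card (Finset.filter_subset _ (Finset.univ : Finset (Fin m)))
  set P : ℕ → Prop := fun k => k ≤ C (α * k / m) with hP
  have hP0 : P 0 := Nat.zero_le _
  set K := Nat.findGreatest P m with hK
  have hKle : K ≤ m := Nat.findGreatest_le m
  have hPK : P K := Nat.findGreatest_spec (Nat.zero_le m) hP0
  set t := α * K / m with ht
  have hPK' : (K:ℝ) ≤ C t := by exact_mod_cast hPK
  have ht0 : 0 ≤ t := by positivity
  have ht1 : t ≤ 1 := by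
    have hKle' : (K:ℝ) ≤ m := by exact_mod_cast hKle
    rw [ht, div_le_one hm0]
    nlinarith
  have htα : t / α = (K:ℝ) / m := by
    rw [ht]; field_simp
  -- key: anything in the set has C u ≤ K and u ≤ α * C u / m
  have key : ∀ u : ℝ, u ∈ Set.Icc (0:ℝ) 1 → u / α ≤ (C u : ℝ) / m →
      C u ≤ K ∧ u ≤ α * (C u : ℝ) / m := by
    intro u hu hule
    have hu2 : u ≤ α * (C u : ℝ) / m := by
      rw [div_le_div_iff₀ hα0 hm0] at hule
      rw [le_div_iff₀ hm0]
      nlinarith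
    have hPc : P (C u) := by
      have h1 : C u ≤ C (α * (C u : ℝ) / m) := hCmono hu2
      simpa [hP] using h1
    exact ⟨Nat.le_findGreatest (hCle u) hPc, hu2⟩
  have htmem : t / α ≤ (C t : ℝ) / m := by
    rw [htα]; gcongr
  -- equality: C t = K
  have hCtK : C t = K := by
    have h1 := (key t ⟨ht0, ht1⟩ htmem).1
    have h2 : K ≤ C t := by exact_mod_cast hPK'
    omega
  refine ⟨⟨⟨le_refl _, zero_le_one⟩, by rw [zero_div]; positivity⟩, t, ⟨⟨ht0, ht1⟩, htmem⟩, ?_, ?_, K, hKle, rfl⟩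
  · intro u hu
    obtain ⟨hu1, hu2⟩ := hu
    obtain ⟨hcK, hub⟩ := key u hu1 hu2
    have hcK' : (C u : ℝ) ≤ K := by exact_mod_cast hcK
    calc u ≤ α * (C u : ℝ) / m := hub
      _ ≤ α * (K:ℝ) / m := by gcongr
  · show (C t : ℝ) / m = t / α
    rw [htα, hCtK]
end

section
/- Fix i ∈ {1,…,m} and let q ∈ [0,1]^m. Let q⁰ denote q with its i-th coordinate replaced by 0, and let t^su denote the Benjamini–Hochberg threshold. Then the events coincide: {q_i ≤ t^su(q⁰)} = {q_i ≤ t^su(q)}, and on this event t^su(q⁰) = t^su(q). -/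
/-- The Benjamini–Hochberg step-up threshold. -/
noncomputable def tsu (m : ℕ) (α : ℝ) (q : Fin m → ℝ) : ℝ :=
  sSup {u | u ∈ Set.Icc (0:ℝ) 1 ∧
    u / α ≤ ((Finset.univ.filter (fun i => q i ≤ u)).card : ℝ) / m}

private lemma tsu_zero_mem (m : ℕ) (α : ℝ) (hα : 0 < α) (q : Fin m → ℝ) :
    (0:ℝ) ∈ {u | u ∈ Set.Icc (0:ℝ) 1 ∧
      u / α ≤ ((Finset.univ.filter (fun i => q i ≤ u)).card : ℝ) / m} := by
  refine ⟨⟨le_refl _, zero_le_one⟩, ?_⟩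
  rw [zero_div]
  positivity

private lemma tsu_bdd (m : ℕ) (α : ℝ) (q : Fin m → ℝ) :
    BddAbove {u | u ∈ Set.Icc (0:ℝ) 1 ∧
      u / α ≤ ((Finset.univ.filter (fun i => q i ≤ u)).card : ℝ) / m} :=
  ⟨1, fun u hu => hu.1.2⟩

private lemma tsu_mem (m : ℕ) (α : ℝ) (hα : 0 < α) (q : Fin m → ℝ) :
    tsu m α q ∈ {u | u ∈ Set.Icc (0:ℝ) 1 ∧
      u / α ≤ ((Finset.univ.filter (fun i => q i ≤ u)).card : ℝ) / m} := by
  set S := {u | u ∈ Set.Icc (0:ℝ) 1 ∧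
      u / α ≤ ((Finset.univ.filter (fun i => q i ≤ u)).card : ℝ) / m} with hS
  have h0 : (0:ℝ) ∈ S := tsu_zero_mem m α hα q
  have hbdd : BddAbove S := tsu_bdd m α q
  have hne : S.Nonempty := ⟨0, h0⟩
  have ht0 : 0 ≤ tsu m α q := le_csSup hbdd h0
  have ht1 : tsu m α q ≤ 1 := csSup_le hne (fun u hu => hu.1.2)
  refine ⟨⟨ht0, ht1⟩, ?_⟩
  set t := tsu m α q with htdef
  set c : ℝ := ((Finset.univ.filter (fun i => q i ≤ t)).card : ℝ) with hc
  have hkey : ∀ u ∈ S, u ≤ α * (c / m) := by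
    intro u hu
    have hut : u ≤ t := le_csSup hbdd hu
    have hsub : (Finset.univ.filter (fun j => q j ≤ u)) ⊆
        (Finset.univ.filter (fun j => q j ≤ t)) := by
      intro j hj
      simp only [Finset.mem_filter, Finset.mem_univ, true_and] at hj ⊢
      exact le_trans hj hut
    have hcard : ((Finset.univ.filter (fun i => q i ≤ u)).card : ℝ) ≤ c := by
      rw [hc]
      exact_mod_cast Finset.card_le_card hsub
    have h2 : u / α ≤ c / m := le_trans hu.2 (by gcongr)
    calc u = α * (u / α) := by field_simp
    _ ≤ α * (c / m) := by nlinarith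
  have : t ≤ α * (c / m) := csSup_le hne hkey
  rw [div_le_iff₀ hα] at *
  linarith [this]

private lemma tsu_mono (m : ℕ) (α : ℝ) (hα : 0 < α) {q q' : Fin m → ℝ}
    (h : ∀ j, q' j ≤ q j) : tsu m α q ≤ tsu m α q' := by
  apply csSup_le_csSup (tsu_bdd m α q') ⟨0, tsu_zero_mem m α hα q⟩
  rintro u ⟨hu1, hu2⟩
  refine ⟨hu1, le_trans hu2 ?_⟩
  have hsub : (Finset.univ.filter (fun j => q j ≤ u)) ⊆
      (Finset.univ.filter (fun j => q' j ≤ u)) := by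
    intro j hj
    simp only [Finset.mem_filter, Finset.mem_univ, true_and] at hj ⊢
    exact le_trans (h j) hj
  have hcard : ((Finset.univ.filter (fun i => q i ≤ u)).card : ℝ) ≤
      ((Finset.univ.filter (fun i => q' i ≤ u)).card : ℝ) :=
    mod_cast Finset.card_le_card hsub
  gcongr

theorem stmt6 (m : ℕ) (hm : 1 ≤ m) (α : ℝ) (hα : α ∈ Set.Ioo (0:ℝ) 1)
    (q : Fin m → ℝ) (hq : ∀ i, q i ∈ Set.Icc (0:ℝ) 1) (i : Fin m) :
    (q i ≤ tsu m α (Function.update q i 0) ↔ q i ≤ tsu m α q) ∧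
    (q i ≤ tsu m α q → tsu m α (Function.update q i 0) = tsu m α q) := by
  have hα0 := hα.1
  have hle : ∀ j, Function.update q i 0 j ≤ q j := by
    intro j
    rcases eq_or_ne j i with rfl | hne
    · simp [(hq j).1]
    · simp [Function.update_of_ne hne]
  have hmono : tsu m α q ≤ tsu m α (Function.update q i 0) := tsu_mono m α hα0 hle
  have hkey : q i ≤ tsu m α (Function.update q i 0) →
      tsu m α (Function.update q i 0) = tsu m α q := by
    intro hqi
    set t0 := tsu m α (Function.update q i 0) with ht0
    have hmem := tsu_mem m α hα0 (Function.update q i 0)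
    have ht00 : 0 ≤ t0 := hmem.1.1
    have hsets : (Finset.univ.filter (fun j => Function.update q i 0 j ≤ t0)) =
        (Finset.univ.filter (fun j => q j ≤ t0)) := by
      apply Finset.filter_congr
      intro j _
      rcases eq_or_ne j i with rfl | hne
      · simp [Function.update_self, ht00, hqi]
      · simp [Function.update_of_ne hne]
    have hmem' : t0 ∈ {u | u ∈ Set.Icc (0:ℝ) 1 ∧
        u / α ≤ ((Finset.univ.filter (fun j => q j ≤ u)).card : ℝ) / m} := by
      refine ⟨hmem.1, ?_⟩
      rw [← hsets]
      exact hmem.2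
    have : t0 ≤ tsu m α q := le_csSup (tsu_bdd m α q) hmem'
    linarith
  constructor
  · constructor
    · intro h; rw [← hkey h]; exact h
    · intro h; linarith
  · intro h
    exact hkey (le_trans h hmono)
end

section
/- Let p₁,…,p_m be random variables in [0,1] with a subset H₀ ⊆ {1,…,m} such that P(p_i ≤ u) ≤ u for all u ∈ [0,1] and i ∈ H₀. For k ∈ {1,…,m}, let R = {i : p_i ≤ min(αk/m, 1)} be the k-FWER Bonferroni procedure. Then P(|R ∩ H₀| ≥ k) ≤ α. -/
open MeasureTheory

theorem stmt8 {Ω : Type*} [MeasurableSpace Ω] (μ : Measure Ω) [IsProbabilityMeasure μ]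
    (m : ℕ) (hm : 2 ≤ m) (α : ℝ) (hα : α ∈ Set.Ioo (0:ℝ) 1)
    (k : ℕ) (hk : 1 ≤ k) (hkm : k ≤ m)
    (p : Fin m → Ω → ℝ) (hmeas : ∀ i, Measurable (p i))
    (hval : ∀ i ω, p i ω ∈ Set.Icc (0:ℝ) 1)
    (H₀ : Finset (Fin m))
    (hnull : ∀ i ∈ H₀, ∀ u ∈ Set.Icc (0:ℝ) 1, (μ {ω | p i ω ≤ u}).toReal ≤ u) :
    (μ {ω | k ≤ ((Finset.univ.filter (fun i => p i ω ≤ min (α * k / m) 1)) ∩ H₀).card}).toReal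
      ≤ α := by
  obtain ⟨hα0, hα1⟩ := hα
  have hm0 : (0:ℝ) < m := by positivity
  set t : ℝ := min (α * k / m) 1 with ht
  have ht0 : 0 ≤ t := by
    apply le_min _ zero_le_one
    positivity
  have htIcc : t ∈ Set.Icc (0:ℝ) 1 := ⟨ht0, min_le_right _ _⟩
  -- f ω = number of false rejections, as ℝ≥0∞
  set f : Ω → ENNReal := fun ω =>
    ∑ i ∈ H₀, Set.indicator {ω | p i ω ≤ t} (fun _ => (1:ENNReal)) ω with hf
  have hSmeas : ∀ i : Fin m, MeasurableSet {ω | p i ω ≤ t} := fun i =>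
    measurableSet_le (hmeas i) measurable_const
  have hfmeas : Measurable f := by
    apply Finset.measurable_sum
    intro i _
    exact (measurable_const.indicator (hSmeas i))
  -- rewrite the card as f
  have hcard : ∀ ω,
      (((Finset.univ.filter (fun i => p i ω ≤ t)) ∩ H₀).card : ENNReal) = f ω := by
    intro ω
    have : (Finset.univ.filter (fun i => p i ω ≤ t)) ∩ H₀
        = H₀.filter (fun i => p i ω ≤ t) := by
      ext i; simp [and_comm]
    rw [this, Finset.card_filter]
    push_cast
    apply Finset.sum_congr rfl
    intro i _
    by_cases h : p i ω ≤ t <;> simp [h, Set.indicator]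
  -- lintegral of f
  have hint : ∫⁻ ω, f ω ∂μ = ∑ i ∈ H₀, μ {ω | p i ω ≤ t} := by
    rw [hf, lintegral_finset_sum _ (fun i _ => measurable_const.indicator (hSmeas i))]
    apply Finset.sum_congr rfl
    intro i _
    rw [lintegral_indicator (hSmeas i)]
    simp
  have hsetbound : ∀ i ∈ H₀, μ {ω | p i ω ≤ t} ≤ ENNReal.ofReal t := by
    intro i hi
    have h1 := hnull i hi t htIcc
    have hfin : μ {ω | p i ω ≤ t} ≠ ⊤ := measure_ne_top _ _
    rw [← ENNReal.ofReal_toReal hfin]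
    exact ENNReal.ofReal_le_ofReal h1
  have hintbound : ∫⁻ ω, f ω ∂μ ≤ ENNReal.ofReal (α * k) := by
    rw [hint]
    calc ∑ i ∈ H₀, μ {ω | p i ω ≤ t}
        ≤ ∑ _i ∈ H₀, ENNReal.ofReal t := Finset.sum_le_sum hsetbound
      _ = (H₀.card : ENNReal) * ENNReal.ofReal t := by rw [Finset.sum_const, nsmul_eq_mul]
      _ ≤ (m : ENNReal) * ENNReal.ofReal t := by
          gcongr
          exact_mod_cast (Finset.card_le_card (Finset.subset_univ H₀)).trans
            (le_of_eq (Finset.card_univ.trans (Fintype.card_fin m)))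
      _ ≤ (m : ENNReal) * ENNReal.ofReal (α * k / m) := by
          gcongr
          exact min_le_left _ _
      _ = ENNReal.ofReal (α * k) := by
          rw [← ENNReal.ofReal_natCast, ← ENNReal.ofReal_mul (le_of_lt hm0)]
          congr 1
          field_simp
  -- Markov
  have hmarkov : (k : ENNReal) * μ {ω | (k : ENNReal) ≤ f ω} ≤ ∫⁻ ω, f ω ∂μ :=
    mul_meas_ge_le_lintegral hfmeas _
  have hsets : {ω | k ≤ ((Finset.univ.filter (fun i => p i ω ≤ t)) ∩ H₀).card}
      = {ω | (k : ENNReal) ≤ f ω} := by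
    ext ω
    simp only [Set.mem_setOf_eq, ← hcard ω]
    exact_mod_cast Iff.rfl
  have key : (k : ENNReal) * μ {ω | (k : ENNReal) ≤ f ω}
      ≤ (k : ENNReal) * ENNReal.ofReal α := by
    refine hmarkov.trans (hintbound.trans_eq ?_)
    rw [mul_comm α, ← ENNReal.ofReal_natCast k, ← ENNReal.ofReal_mul (by positivity)]
  have hk0 : (k : ENNReal) ≠ 0 := Nat.cast_ne_zero.mpr (by omega)
  have hmu : μ {ω | (k : ENNReal) ≤ f ω} ≤ ENNReal.ofReal α :=
    (ENNReal.mul_le_mul_iff_right hk0 (ENNReal.natCast_ne_top k)).mp key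
  rw [hsets]
  calc (μ {ω | (k : ENNReal) ≤ f ω}).toReal
      ≤ (ENNReal.ofReal α).toReal := ENNReal.toReal_mono ENNReal.ofReal_ne_top hmu
    _ = α := ENNReal.toReal_ofReal (le_of_lt hα0)
end

section
/- Let R : [0,1]^m → 2^{1,…,m} be a thresholding procedure R_t(p) = {i : p_i ≤ t(p)} with t(p) ∈ T(p) = {u ∈ [0,1] : Ĝ(p,u) ≥ u/α} (self-consistency) and t coordinate-wise non-increasing. Assume the p-value family is weak PRDS on H₀(P) and each null p-value satisfies P(p_i ≤ u) ≤ u. Then FDR(R_t, P) = E[|R_t ∩ H₀|/(|R_t| ∨ 1)] ≤ α·m₀/m ≤ α, where m₀ = |H₀(P)|. -/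
open MeasureTheory

theorem stmt9 {Ω : Type*} [MeasurableSpace Ω] (μ : Measure Ω) [IsProbabilityMeasure μ]
    (m : ℕ) (hm : 2 ≤ m) (α : ℝ) (hα : α ∈ Set.Ioo (0:ℝ) 1)
    (p : Fin m → Ω → ℝ) (hmeas : ∀ i, Measurable (p i))
    (hval : ∀ i ω, p i ω ∈ Set.Icc (0:ℝ) 1)
    (H₀ : Finset (Fin m))
    (hnull : ∀ i ∈ H₀, ∀ u ∈ Set.Icc (0:ℝ) 1, (μ {ω | p i ω ≤ u}).toReal ≤ u)
    (t : (Fin m → ℝ) → ℝ) (htmeas : Measurable t)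
    -- self-consistency: t(q) ∈ T(q) = {u ∈ [0,1] : Ĝ(q,u) ≥ u/α}
    (hsc : ∀ q : Fin m → ℝ, t q ∈ Set.Icc (0:ℝ) 1 ∧
      t q / α ≤ ((Finset.univ.filter (fun i => q i ≤ t q)).card : ℝ) / m)
    -- coordinate-wise non-increasing
    (hanti : ∀ q q' : Fin m → ℝ, (∀ i, q' i ≤ q i) → t q ≤ t q')
    -- weak PRDS on H₀
    (hPRDS : ∀ i ∈ H₀, ∀ D : Set (Fin m → ℝ), MeasurableSet D →
      (∀ x y : Fin m → ℝ, x ∈ D → (∀ j, x j ≤ y j) → y ∈ D) →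
      ∀ u v : ℝ, u ∈ Set.Icc (0:ℝ) 1 → v ∈ Set.Icc (0:ℝ) 1 → u ≤ v →
      0 < μ {ω | p i ω ≤ u} →
      μ ({ω | (fun j => p j ω) ∈ D} ∩ {ω | p i ω ≤ u}) / μ {ω | p i ω ≤ u} ≤
        μ ({ω | (fun j => p j ω) ∈ D} ∩ {ω | p i ω ≤ v}) / μ {ω | p i ω ≤ v}) :
    (∫ ω, ((Finset.univ.filter (fun i => p i ω ≤ t (fun j => p j ω)) ∩ H₀).card : ℝ) /
        max ((Finset.univ.filter (fun i => p i ω ≤ t (fun j => p j ω))).card : ℝ) 1 ∂μ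
      ≤ α * H₀.card / m) ∧
    α * H₀.card / m ≤ α := by
  obtain ⟨hα0, hα1⟩ := hα
  have hm0 : 0 < m := by omega
  have hmR : (0:ℝ) < m := by exact_mod_cast hm0
  have hcardH : (H₀.card : ℝ) ≤ m := by
    have := Finset.card_le_univ H₀
    simp only [Finset.card_univ, Fintype.card_fin] at this
    exact_mod_cast this
  refine ⟨?_, ?_⟩
  swap
  · rw [div_le_iff₀ hmR]
    nlinarith
  -- main part
  set P : Ω → (Fin m → ℝ) := fun ω j => p j ω with hPdef
  have hP : Measurable P := measurable_pi_lambda _ hmeas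
  set R₀ : (Fin m → ℝ) → ℕ := fun q => (Finset.univ.filter fun i => q i ≤ t q).card with hR₀def
  have hR₀m : Measurable R₀ := by
    have h : R₀ = fun q => ∑ j : Fin m, if q j ≤ t q then 1 else 0 := by
      funext q; exact Finset.card_filter _ _
    rw [h]
    exact Finset.measurable_sum _ fun j _ =>
      Measurable.ite (measurableSet_le (measurable_pi_apply j) htmeas)
        measurable_const measurable_const
  have hRle : ∀ q, R₀ q ≤ m := fun q => by
    simpa using Finset.card_filter_le Finset.univ (fun i => q i ≤ t q)
  have hSmeas : ∀ k : ℕ, MeasurableSet {ω | R₀ (P ω) = k} := fun k =>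
    (hR₀m.comp hP) (measurableSet_singleton k)
  have hEmeas : ∀ i : Fin m, MeasurableSet {ω | p i ω ≤ t (P ω)} :=
    fun i => measurableSet_le (hmeas i) (htmeas.comp hP)
  -- pointwise decomposition of the FDP
  have hpoint : ∀ ω, ((Finset.univ.filter (fun i => p i ω ≤ t (fun j => p j ω)) ∩ H₀).card : ℝ) /
        max ((Finset.univ.filter (fun i => p i ω ≤ t (fun j => p j ω))).card : ℝ) 1
      = ∑ i ∈ H₀, ∑ j ∈ Finset.range m,
          Set.indicator ({ω' | p i ω' ≤ t (P ω')} ∩ {ω' | R₀ (P ω') = j+1})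
            (fun _ => ((j:ℝ)+1)⁻¹) ω := by
    intro ω
    rcases Nat.eq_zero_or_pos (R₀ (P ω)) with h0 | hpos
    · have hfil : Finset.univ.filter (fun i => p i ω ≤ t (fun j => p j ω)) = ∅ :=
        Finset.card_eq_zero.mp h0
      rw [hfil]
      simp only [Finset.empty_inter, Finset.card_empty, Nat.cast_zero, zero_div]
      symm
      refine Finset.sum_eq_zero fun i _ => Finset.sum_eq_zero fun j _ => ?_
      apply Set.indicator_of_notMem
      rintro ⟨-, h2⟩
      simp only [Set.mem_setOf_eq] at h2
      omega
    · obtain ⟨s, hs⟩ : ∃ s, R₀ (P ω) = s + 1 := ⟨R₀ (P ω) - 1, by omega⟩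
      have hsm : s ∈ Finset.range m := by
        have := hRle (P ω); rw [Finset.mem_range]; omega
      have hcard : (Finset.univ.filter (fun i => p i ω ≤ t (fun j => p j ω))).card = s + 1 := hs
      have hmax : max ((Finset.univ.filter (fun i => p i ω ≤ t (fun j => p j ω))).card : ℝ) 1
          = ((s:ℝ)+1) := by
        rw [hcard]
        push_cast
        refine max_eq_left ?_
        have : (0:ℝ) ≤ s := Nat.cast_nonneg s
        linarith
      rw [hmax]
      have hinner : ∀ i : Fin m, ∑ j ∈ Finset.range m,
          Set.indicator ({ω' | p i ω' ≤ t (P ω')} ∩ {ω' | R₀ (P ω') = j+1})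
            (fun _ => ((j:ℝ)+1)⁻¹) ω
          = if p i ω ≤ t (P ω) then ((s:ℝ)+1)⁻¹ else 0 := by
        intro i
        rw [Finset.sum_eq_single_of_mem s hsm]
        · by_cases hc : p i ω ≤ t (P ω)
          · rw [Set.indicator_of_mem
              (show ω ∈ {ω' | p i ω' ≤ t (P ω')} ∩ {ω' | R₀ (P ω') = s+1} from ⟨hc, hs⟩),
              if_pos hc]
          · rw [Set.indicator_of_notMem (fun hmem => hc hmem.1), if_neg hc]
        · intro j _ hjs
          apply Set.indicator_of_notMem
          rintro ⟨-, h2⟩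
          simp only [Set.mem_setOf_eq] at h2
          omega
      calc ((Finset.univ.filter (fun i => p i ω ≤ t (fun j => p j ω)) ∩ H₀).card : ℝ) / ((s:ℝ)+1)
          = ∑ i ∈ H₀, if p i ω ≤ t (P ω) then ((s:ℝ)+1)⁻¹ else 0 := by
            have hic : Finset.univ.filter (fun i => p i ω ≤ t (fun j => p j ω)) ∩ H₀
                = H₀.filter (fun i => p i ω ≤ t (P ω)) := by
              ext i
              simp only [Finset.mem_inter, Finset.mem_filter, Finset.mem_univ, true_and]
              tauto
            rw [hic, ← Finset.sum_filter, Finset.sum_const, nsmul_eq_mul, div_eq_mul_inv]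
        _ = _ := by
            refine Finset.sum_congr rfl fun i _ => (hinner i).symm
  -- compute the integral
  have hintgr : ∀ (i : Fin m) (j : ℕ), Integrable
      (Set.indicator ({ω' | p i ω' ≤ t (P ω')} ∩ {ω' | R₀ (P ω') = j+1})
        (fun _ => ((j:ℝ)+1)⁻¹)) μ :=
    fun i j => (integrable_const _).indicator ((hEmeas i).inter (hSmeas (j+1)))
  have hint : ∫ ω, ((Finset.univ.filter (fun i => p i ω ≤ t (fun j => p j ω)) ∩ H₀).card : ℝ) /
        max ((Finset.univ.filter (fun i => p i ω ≤ t (fun j => p j ω))).card : ℝ) 1 ∂μ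
      = ∑ i ∈ H₀, ∑ j ∈ Finset.range m,
          ((j:ℝ)+1)⁻¹ * (μ ({ω | p i ω ≤ t (P ω)} ∩ {ω | R₀ (P ω) = j+1})).toReal := by
    rw [integral_congr_ae (Filter.Eventually.of_forall hpoint)]
    rw [integral_finset_sum _ (fun i _ => integrable_finset_sum _ (fun j _ => hintgr i j))]
    refine Finset.sum_congr rfl fun i _ => ?_
    rw [integral_finset_sum _ (fun j _ => hintgr i j)]
    refine Finset.sum_congr rfl fun j _ => ?_
    rw [integral_indicator_const _ ((hEmeas i).inter (hSmeas (j+1)))]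
    rw [smul_eq_mul, mul_comm]
    rfl
  rw [hint]
  -- per-hypothesis bound
  have key : ∀ i ∈ H₀, ∑ j ∈ Finset.range m,
      ((j:ℝ)+1)⁻¹ * (μ ({ω | p i ω ≤ t (P ω)} ∩ {ω | R₀ (P ω) = j+1})).toReal ≤ α / m := by
    intro i hi
    set u : ℕ → ℝ := fun k => α * k / m with hu
    set A : ℕ → Set Ω := fun k => {ω | p i ω ≤ u k} with hA
    set B : ℕ → Set Ω := fun k => {ω | R₀ (P ω) ≤ k} with hB
    set g : ℕ → ℝ := fun k => (μ (B k ∩ A k)).toReal / (μ (A k)).toReal with hg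
    have humono : ∀ k l : ℕ, k ≤ l → u k ≤ u l := by
      intro k l hkl
      have : (k:ℝ) ≤ l := by exact_mod_cast hkl
      simp only [hu]
      exact div_le_div_of_nonneg_right (by nlinarith) (le_of_lt hmR)
    have hum : ∀ k : ℕ, k ≤ m → u k ∈ Set.Icc (0:ℝ) 1 := by
      intro k hk
      constructor
      · simp only [hu]; positivity
      · simp only [hu]
        rw [div_le_one hmR]
        have hk' : (k:ℝ) ≤ m := by exact_mod_cast hk
        nlinarith
    have hAsub : ∀ k l : ℕ, k ≤ l → A k ⊆ A l := by
      intro k l hkl ω hω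
      exact le_trans hω (humono k l hkl)
    have hAmeas : ∀ k, MeasurableSet (A k) := fun k => measurableSet_le (hmeas i) measurable_const
    have hAfin : ∀ k, μ (A k) ≠ ⊤ := fun k => measure_ne_top μ _
    have hAle : ∀ k : ℕ, k ≤ m → (μ (A k)).toReal ≤ u k := fun k hk =>
      hnull i hi (u k) (hum k hk)
    have hBsub : ∀ k l : ℕ, k ≤ l → B k ⊆ B l := by
      intro k l hkl ω hω
      exact le_trans hω hkl
    have hDmeas : ∀ k : ℕ, MeasurableSet {q : Fin m → ℝ | R₀ q ≤ k} :=
      fun k => hR₀m measurableSet_Iic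
    have hDmono : ∀ k : ℕ, ∀ x y : Fin m → ℝ,
        x ∈ {q : Fin m → ℝ | R₀ q ≤ k} → (∀ j, x j ≤ y j) → y ∈ {q : Fin m → ℝ | R₀ q ≤ k} := by
      intro k x y hx hxy
      have hty : t y ≤ t x := hanti y x hxy
      have hsub : Finset.univ.filter (fun j => y j ≤ t y) ⊆
          Finset.univ.filter (fun j => x j ≤ t x) := by
        intro j hj
        rw [Finset.mem_filter] at hj ⊢
        exact ⟨hj.1, le_trans (hxy j) (le_trans hj.2 hty)⟩
      exact le_trans (Finset.card_le_card hsub) hx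
    have hprds : ∀ k : ℕ, k + 1 ≤ m → 0 < μ (A k) →
        μ (B k ∩ A k) / μ (A k) ≤ μ (B k ∩ A (k+1)) / μ (A (k+1)) := by
      intro k hk hpos
      exact hPRDS i hi {q : Fin m → ℝ | R₀ q ≤ k} (hDmeas k) (hDmono k) (u k) (u (k+1))
        (hum k (by omega)) (hum (k+1) hk) (humono k (k+1) (by omega)) hpos
    have hg0 : ∀ k, 0 ≤ g k := fun k => by
      simp only [hg]; positivity
    have hg1 : ∀ k, g k ≤ 1 := by
      intro k
      simp only [hg]
      apply div_le_one_of_le₀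
      · exact ENNReal.toReal_mono (hAfin k) (measure_mono Set.inter_subset_right)
      · exact ENNReal.toReal_nonneg
    have hgne : ∀ k, μ (A k) = 0 → g k = 0 := by
      intro k hk
      simp only [hg, measure_mono_null Set.inter_subset_right hk, ENNReal.toReal_zero, zero_div]
    have hAposReal : ∀ k, 0 < μ (A k) → 0 < (μ (A k)).toReal :=
      fun k hk => ENNReal.toReal_pos (ne_of_gt hk) (hAfin k)
    -- the conditional bound transported to reals
    have hcond : ∀ k : ℕ, k + 1 ≤ m → 0 < μ (A k) →
        g k ≤ (μ (B k ∩ A (k+1))).toReal / (μ (A (k+1))).toReal := by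
      intro k hk hpos
      have h1 := hprds k hk hpos
      have hpos1 : μ (A (k+1)) ≠ 0 := by
        intro h
        exact absurd (measure_mono_null (hAsub k (k+1) (by omega)) h) (ne_of_gt hpos)
      have hfin : μ (B k ∩ A (k+1)) / μ (A (k+1)) ≠ ⊤ :=
        (ENNReal.div_lt_top (measure_ne_top μ _) hpos1).ne
      have h2 := ENNReal.toReal_mono hfin h1
      rw [ENNReal.toReal_div, ENNReal.toReal_div] at h2
      exact h2
    have hgmono : ∀ k : ℕ, k + 1 ≤ m → g k ≤ g (k+1) := by
      intro k hk
      rcases eq_or_lt_of_le (zero_le : 0 ≤ μ (A k)) with h | hpos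
      · rw [hgne k h.symm]; exact hg0 _
      · refine le_trans (hcond k hk hpos) ?_
        have hpos1 : 0 < (μ (A (k+1))).toReal := by
          apply hAposReal
          rcases eq_or_lt_of_le (zero_le : 0 ≤ μ (A (k+1))) with h | h
          · exact absurd (measure_mono_null (hAsub k (k+1) (by omega)) h.symm)
              (ne_of_gt hpos)
          · exact h
        rw [hg, div_le_div_iff_of_pos_right hpos1]
        exact ENNReal.toReal_mono (measure_ne_top μ _)
          (measure_mono (Set.inter_subset_inter_left _ (hBsub k (k+1) (by omega))))
    -- key bound for each k
    have hkey : ∀ k : ℕ, k + 1 ≤ m →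
        (μ (A (k+1) ∩ {ω | R₀ (P ω) = k+1})).toReal ≤ u (k+1) * (g (k+1) - g k) := by
      intro k hk
      have hsetid : A (k+1) ∩ {ω | R₀ (P ω) = k+1} = (B (k+1) ∩ A (k+1)) \ (B k ∩ A (k+1)) := by
        ext ω
        simp only [Set.mem_inter_iff, Set.mem_diff, Set.mem_setOf_eq, hA, hB]
        constructor
        · rintro ⟨h1, h2⟩
          refine ⟨⟨le_of_eq h2, h1⟩, ?_⟩
          rintro ⟨hc, -⟩
          omega
        · rintro ⟨⟨h1, h2⟩, h3⟩
          refine ⟨h2, ?_⟩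
          by_contra hne
          exact h3 ⟨by omega, h2⟩
      have hsub : B k ∩ A (k+1) ⊆ B (k+1) ∩ A (k+1) :=
        Set.inter_subset_inter_left _ (hBsub k (k+1) (by omega))
      have hBAmeas : MeasurableSet (B k ∩ A (k+1)) :=
        (((hR₀m.comp hP) measurableSet_Iic).inter (hAmeas (k+1)))
      have hdiff : μ ((B (k+1) ∩ A (k+1)) \ (B k ∩ A (k+1)))
          = μ (B (k+1) ∩ A (k+1)) - μ (B k ∩ A (k+1)) :=
        measure_diff hsub hBAmeas.nullMeasurableSet (measure_ne_top μ _)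
      have htor : (μ (A (k+1) ∩ {ω | R₀ (P ω) = k+1})).toReal
          = (μ (B (k+1) ∩ A (k+1))).toReal - (μ (B k ∩ A (k+1))).toReal := by
        rw [hsetid, hdiff, ENNReal.toReal_sub_of_le (measure_mono hsub) (measure_ne_top μ _)]
      rw [htor]
      rcases eq_or_lt_of_le (zero_le : 0 ≤ μ (A (k+1))) with hz | hpos
      · have hAk : μ (A k) = 0 := measure_mono_null (hAsub k (k+1) (by omega)) hz.symm
        rw [hgne (k+1) hz.symm, hgne k hAk]
        have h1 : μ (B (k+1) ∩ A (k+1)) = 0 :=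
          measure_mono_null Set.inter_subset_right hz.symm
        have h2 : μ (B k ∩ A (k+1)) = 0 :=
          measure_mono_null Set.inter_subset_right hz.symm
        simp [h1, h2]
      · have ha : 0 < (μ (A (k+1))).toReal := hAposReal _ hpos
        have hn2 : (μ (B (k+1) ∩ A (k+1))).toReal = g (k+1) * (μ (A (k+1))).toReal := by
          rw [hg]
          field_simp
        have hn1 : g k * (μ (A (k+1))).toReal ≤ (μ (B k ∩ A (k+1))).toReal := by
          rcases eq_or_lt_of_le (zero_le : 0 ≤ μ (A k)) with hz | hposk
          · rw [hgne k hz.symm, zero_mul]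
            exact ENNReal.toReal_nonneg
          · have := hcond k hk hposk
            calc g k * (μ (A (k+1))).toReal
                ≤ ((μ (B k ∩ A (k+1))).toReal / (μ (A (k+1))).toReal) * (μ (A (k+1))).toReal :=
                  mul_le_mul_of_nonneg_right this (le_of_lt ha)
              _ = (μ (B k ∩ A (k+1))).toReal := by field_simp
        have hgm := hgmono k hk
        calc (μ (B (k+1) ∩ A (k+1))).toReal - (μ (B k ∩ A (k+1))).toReal
            ≤ g (k+1) * (μ (A (k+1))).toReal - g k * (μ (A (k+1))).toReal := by
              rw [hn2]; linarith
          _ = (g (k+1) - g k) * (μ (A (k+1))).toReal := by ring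
          _ ≤ (g (k+1) - g k) * u (k+1) :=
              mul_le_mul_of_nonneg_left (hAle (k+1) hk) (by linarith)
          _ = u (k+1) * (g (k+1) - g k) := by ring
    -- self-consistency: rejection of i forces p i small
    have hEsub : ∀ k : ℕ, {ω | p i ω ≤ t (P ω)} ∩ {ω | R₀ (P ω) = k+1}
        ⊆ A (k+1) ∩ {ω | R₀ (P ω) = k+1} := by
      intro k ω hω
      obtain ⟨h1, h2⟩ := hω
      refine ⟨?_, h2⟩
      simp only [Set.mem_setOf_eq] at h1 h2 ⊢
      have hs2 := (hsc (P ω)).2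
      have hcard : ((Finset.univ.filter (fun j => P ω j ≤ t (P ω))).card : ℝ) = (k:ℝ) + 1 := by
        have : (Finset.univ.filter (fun j => P ω j ≤ t (P ω))).card = k + 1 := h2
        rw [this]; push_cast; ring
      rw [hcard] at hs2
      have ht : t (P ω) ≤ α * ((k:ℝ)+1) / m := by
        rw [div_le_div_iff₀ hα0 hmR] at hs2
        rw [le_div_iff₀ hmR]
        nlinarith
      refine le_trans h1 ?_
      simp only [hu]
      push_cast
      exact ht
    -- put it together
    calc ∑ j ∈ Finset.range m,
          ((j:ℝ)+1)⁻¹ * (μ ({ω | p i ω ≤ t (P ω)} ∩ {ω | R₀ (P ω) = j+1})).toReal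
        ≤ ∑ j ∈ Finset.range m, ((j:ℝ)+1)⁻¹ * (u (j+1) * (g (j+1) - g j)) := by
          refine Finset.sum_le_sum fun j hj => ?_
          have hjm : j + 1 ≤ m := Finset.mem_range.mp hj
          refine mul_le_mul_of_nonneg_left ?_ (by positivity)
          refine le_trans ?_ (hkey j hjm)
          exact ENNReal.toReal_mono (measure_ne_top μ _) (measure_mono (hEsub j))
      _ = ∑ j ∈ Finset.range m, (α / m) * (g (j+1) - g j) := by
          refine Finset.sum_congr rfl fun j hj => ?_
          have hj1 : ((j:ℝ)+1) ≠ 0 := by positivity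
          simp only [hu]
          push_cast
          field_simp
      _ = (α / m) * (g m - g 0) := by
          rw [← Finset.mul_sum, Finset.sum_range_sub]
      _ ≤ α / m := by
          have h1 := hg1 m
          have h2 := hg0 0
          have : g m - g 0 ≤ 1 := by linarith
          nlinarith [div_pos hα0 hmR]
  calc ∑ i ∈ H₀, ∑ j ∈ Finset.range m,
        ((j:ℝ)+1)⁻¹ * (μ ({ω | p i ω ≤ t (P ω)} ∩ {ω | R₀ (P ω) = j+1})).toReal
      ≤ ∑ _i ∈ H₀, α / m := Finset.sum_le_sum key
    _ = α * H₀.card / m := by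
        rw [Finset.sum_const, nsmul_eq_mul]
        ring
end

section
/- Under mutual independence of the null p-values, independence of null from alternative p-values, and exact uniformity P(p_i ≤ u) = u for all u ∈ [0,1] and i ∈ H₀, the Benjamini–Hochberg (linear step-up) procedure R with threshold t^su(p) = max{u : Ĝ(p,u) ≥ u/α} satisfies FDR(R, P) = α·m₀/m exactly. -/
open MeasureTheory ProbabilityTheory

namespace BHproof

/-- number of p-values ≤ u -/
noncomputable def cnt (m : ℕ) (q : Fin m → ℝ) (u : ℝ) : ℕ :=
  (Finset.univ.filter (fun i => q i ≤ u)).card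

/-- candidate set of rejection counts -/
noncomputable def kset (m : ℕ) (α : ℝ) (q : Fin m → ℝ) : Finset ℕ :=
  (Finset.range (m+1)).filter (fun k => (k:ℝ) ≤ (cnt m q (α * k / m) : ℝ))

lemma zero_mem_kset (m : ℕ) (α : ℝ) (q : Fin m → ℝ) : 0 ∈ kset m α q := by
  simp [kset, Nat.cast_nonneg]

/-- the number of rejections of BH -/
noncomputable def Kfun (m : ℕ) (α : ℝ) (q : Fin m → ℝ) : ℕ :=
  (kset m α q).max' ⟨0, zero_mem_kset m α q⟩

lemma Kfun_mem (m : ℕ) (α : ℝ) (q : Fin m → ℝ) : Kfun m α q ∈ kset m α q :=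
  Finset.max'_mem _ _

lemma le_Kfun {m : ℕ} {α : ℝ} {q : Fin m → ℝ} {k : ℕ} (hk : k ∈ kset m α q) :
    k ≤ Kfun m α q := Finset.le_max' _ _ hk

lemma Kfun_le (m : ℕ) (α : ℝ) (q : Fin m → ℝ) : Kfun m α q ≤ m := by
  have := Kfun_mem m α q
  simp only [kset, Finset.mem_filter, Finset.mem_range] at this
  omega

lemma cnt_le (m : ℕ) (q : Fin m → ℝ) (u : ℝ) : cnt m q u ≤ m := by
  simpa [cnt] using (Finset.card_filter_le Finset.univ (fun i => q i ≤ u))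

lemma cnt_mono (m : ℕ) (q : Fin m → ℝ) {u v : ℝ} (h : u ≤ v) : cnt m q u ≤ cnt m q v := by
  apply Finset.card_le_card
  intro i hi
  simp only [Finset.mem_filter, Finset.mem_univ, true_and] at *
  exact hi.trans h

lemma cnt_anti (m : ℕ) {q q' : Fin m → ℝ} (h : ∀ j, q' j ≤ q j) (u : ℝ) :
    cnt m q u ≤ cnt m q' u := by
  apply Finset.card_le_card
  intro i hi
  simp only [Finset.mem_filter, Finset.mem_univ, true_and] at *
  exact (h i).trans hi

lemma Kfun_mem' (m : ℕ) (α : ℝ) (q : Fin m → ℝ) :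
    ((Kfun m α q : ℝ)) ≤ (cnt m q (α * Kfun m α q / m) : ℝ) := by
  have := Kfun_mem m α q
  simp only [kset, Finset.mem_filter, Finset.mem_range] at this
  exact this.2

section fixed
variable {m : ℕ} {α : ℝ}

/-- The BH threshold -/
noncomputable def Tfun (m : ℕ) (α : ℝ) (q : Fin m → ℝ) : ℝ := α * Kfun m α q / m

lemma mem_kset_iff {k : ℕ} {q : Fin m → ℝ} :
    k ∈ kset m α q ↔ k ≤ m ∧ (k:ℝ) ≤ (cnt m q (α * k / m) : ℝ) := by
  simp only [kset, Finset.mem_filter, Finset.mem_range]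
  constructor
  · rintro ⟨h1, h2⟩; exact ⟨by omega, h2⟩
  · rintro ⟨h1, h2⟩; exact ⟨by omega, h2⟩

lemma tsu_eq (hm : 2 ≤ m) (hα : α ∈ Set.Ioo (0:ℝ) 1) (q : Fin m → ℝ) :
    tsu m α q = Tfun m α q := by
  have hmpos : (0:ℝ) < m := by
    have : (2:ℝ) ≤ m := by exact_mod_cast hm
    linarith
  have hK := Kfun_mem' m α q
  apply IsGreatest.csSup_eq
  constructor
  · refine ⟨⟨div_nonneg (mul_nonneg hα.1.le (Nat.cast_nonneg _)) hmpos.le, ?_⟩, ?_⟩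
    · have hKm : (Kfun m α q : ℝ) ≤ m := by exact_mod_cast Kfun_le m α q
      calc Tfun m α q = α * Kfun m α q / m := rfl
        _ ≤ α * m / m := by gcongr; exact hα.1.le
        _ = α := by field_simp
        _ ≤ 1 := hα.2.le
    · show Tfun m α q / α ≤ _
      have h1 : Tfun m α q / α = (Kfun m α q : ℝ) / m := by
        unfold Tfun; field_simp [hα.1.ne']
      rw [h1]
      gcongr
      show (Kfun m α q : ℕ) ≤ cnt m q (Tfun m α q)
      exact_mod_cast hK
  · rintro u ⟨⟨hu0, hu1⟩, hu⟩
    set c := cnt m q u with hc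
    have hcc : (u / α) ≤ (c:ℝ)/m := hu
    have hcu : u ≤ α * c / m := by
      have := mul_le_mul_of_nonneg_left hcc hα.1.le
      calc u = α * (u / α) := by
              rw [mul_div_cancel₀ _ hα.1.ne']
        _ ≤ α * ((c:ℝ)/m) := this
        _ = α * c / m := by ring
    have hmem : c ∈ kset m α q := by
      rw [mem_kset_iff]
      refine ⟨cnt_le m q u, ?_⟩
      exact_mod_cast cnt_mono m q hcu
    calc u ≤ α * c / m := hcu
      _ ≤ α * Kfun m α q / m := by
          gcongr
          · exact hα.1.le
          · exact_mod_cast le_Kfun hmem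
      _ = Tfun m α q := rfl

lemma cnt_Tfun (hm : 2 ≤ m) (hα : α ∈ Set.Ioo (0:ℝ) 1) (q : Fin m → ℝ) :
    cnt m q (Tfun m α q) = Kfun m α q := by
  have hmpos : (0:ℝ) < m := by
    have : (2:ℝ) ≤ m := by exact_mod_cast hm
    linarith
  have hK := Kfun_mem' m α q
  refine le_antisymm ?_ ?_
  · -- c ≤ K : show c ∈ kset
    set c := cnt m q (Tfun m α q) with hc
    apply le_Kfun
    rw [mem_kset_iff]
    refine ⟨cnt_le _ _ _, ?_⟩
    have hKc : Kfun m α q ≤ c := by exact_mod_cast hK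
    have : Tfun m α q ≤ α * c / m := by
      unfold Tfun
      gcongr
      all_goals first | exact hα.1.le | exact_mod_cast hKc
    exact_mod_cast cnt_mono m q this
  · exact_mod_cast hK

/-! ### Leave-one-out lemmas -/

variable {i : Fin m} {q : Fin m → ℝ}

lemma update_le (hq : ∀ j, 0 ≤ q j) (j : Fin m) : Function.update q i 0 j ≤ q j := by
  rcases eq_or_ne j i with rfl | h
  · rw [Function.update_self]; exact hq j
  · simp [Function.update_of_ne h]

lemma Kfun_le_update (hq : ∀ j, 0 ≤ q j) :
    Kfun m α q ≤ Kfun m α (Function.update q i 0) := by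
  apply le_Kfun
  rw [mem_kset_iff]
  have h := Kfun_mem m α q
  rw [mem_kset_iff] at h
  refine ⟨h.1, h.2.trans ?_⟩
  exact_mod_cast cnt_anti m (update_le hq) _

lemma cnt_update_eq (hq : ∀ j, 0 ≤ q j) {u : ℝ} (hu : q i ≤ u) :
    cnt m (Function.update q i 0) u = cnt m q u := by
  unfold cnt
  congr 1
  apply Finset.filter_congr
  intro j _
  rcases eq_or_ne j i with rfl | h
  · simp only [Function.update_self]
    constructor
    · intro _; exact hu
    · intro _; exact le_trans (hq j) hu
  · simp [Function.update_of_ne h]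

lemma Kfun_update_eq (hq : ∀ j, 0 ≤ q j)
    (hle : q i ≤ Tfun m α (Function.update q i 0)) :
    Kfun m α q = Kfun m α (Function.update q i 0) := by
  refine le_antisymm (Kfun_le_update hq) ?_
  apply le_Kfun
  rw [mem_kset_iff]
  have h := Kfun_mem m α (Function.update q i 0)
  rw [mem_kset_iff] at h
  refine ⟨h.1, ?_⟩
  have := cnt_update_eq (i := i) hq hle
  rw [show α * (Kfun m α (Function.update q i 0)) / m
      = Tfun m α (Function.update q i 0) from rfl] at h ⊢
  rw [← this]
  exact h.2

lemma one_le_Kfun_update (hm : 2 ≤ m) (hα : α ∈ Set.Ioo (0:ℝ) 1) (hq : ∀ j, 0 ≤ q j) :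
    1 ≤ Kfun m α (Function.update q i 0) := by
  have hmpos : (0:ℝ) < m := by
    have : (2:ℝ) ≤ m := by exact_mod_cast hm
    linarith
  apply le_Kfun
  rw [mem_kset_iff]
  refine ⟨by omega, ?_⟩
  have hi : i ∈ Finset.univ.filter (fun j => Function.update q i 0 j ≤ α * (1:ℕ) / m) := by
    simp only [Finset.mem_filter, Finset.mem_univ, true_and, Function.update_self]
    exact div_nonneg (mul_nonneg hα.1.le (by norm_num)) hmpos.le
  have : 1 ≤ cnt m (Function.update q i 0) (α * (1:ℕ) / m) :=
    Finset.card_pos.mpr ⟨i, hi⟩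
  exact_mod_cast this

lemma event_iff (hm : 2 ≤ m) (hα : α ∈ Set.Ioo (0:ℝ) 1) (hq : ∀ j, 0 ≤ q j) :
    q i ≤ Tfun m α q ↔ q i ≤ Tfun m α (Function.update q i 0) := by
  have hmpos : (0:ℝ) < m := by
    have : (2:ℝ) ≤ m := by exact_mod_cast hm
    linarith
  constructor
  · intro h
    refine h.trans ?_
    unfold Tfun
    gcongr
    · exact hα.1.le
    · exact_mod_cast Kfun_le_update hq
  · intro h
    rwa [show Tfun m α q = Tfun m α (Function.update q i 0) by
      unfold Tfun; rw [Kfun_update_eq hq h]]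

/-! ### Measurability -/

lemma cnt_eq_sum (q : Fin m → ℝ) (u : ℝ) :
    cnt m q u = ∑ j : Fin m, if q j ≤ u then 1 else 0 := by
  rw [cnt, Finset.card_filter]

lemma meas_cnt (u : ℝ) : Measurable (fun q : Fin m → ℝ => cnt m q u) := by
  have heq : (fun q : Fin m → ℝ => cnt m q u)
      = fun q => ∑ j : Fin m, if q j ≤ u then 1 else 0 := funext fun q => cnt_eq_sum q u
  rw [heq]
  apply Finset.measurable_sum
  intro j _
  apply Measurable.ite _ measurable_const measurable_const
  exact (measurable_pi_apply j) measurableSet_Iic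

lemma measSet_mem_kset (k : ℕ) : MeasurableSet {q : Fin m → ℝ | k ∈ kset m α q} := by
  have : {q : Fin m → ℝ | k ∈ kset m α q}
      = (fun q => cnt m q (α * k / m)) ⁻¹' {c : ℕ | k ≤ c ∧ k ≤ m} := by
    ext q
    simp only [Set.mem_setOf_eq, mem_kset_iff, Set.mem_preimage, Nat.cast_le]
    tauto
  rw [this]
  exact (meas_cnt _) trivial

lemma meas_Kfun : Measurable (fun q : Fin m → ℝ => Kfun m α q) := by
  apply measurable_to_countable'
  intro k
  have : (fun q : Fin m → ℝ => Kfun m α q) ⁻¹' {k}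
      = {q : Fin m → ℝ | k ∈ kset m α q} ∩
        ⋂ (j : ℕ) (_ : j ∈ Finset.range (m+1)), {q : Fin m → ℝ | j ∈ kset m α q → j ≤ k} := by
    ext q
    simp only [Set.mem_preimage, Set.mem_singleton_iff, Set.mem_inter_iff, Set.mem_iInter,
      Set.mem_setOf_eq, Finset.mem_range]
    constructor
    · rintro rfl
      exact ⟨Kfun_mem m α q, fun j _ hj => le_Kfun hj⟩
    · rintro ⟨h1, h2⟩
      refine le_antisymm ?_ (le_Kfun h1)
      have hmem := Kfun_mem m α q
      have hlt : Kfun m α q < m + 1 := by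
        have := Kfun_le m α q; omega
      exact h2 _ hlt hmem
  rw [this]
  apply (measSet_mem_kset k).inter
  apply MeasurableSet.iInter
  intro j
  apply MeasurableSet.iInter
  intro _
  by_cases hjk : j ≤ k
  · have : {q : Fin m → ℝ | j ∈ kset m α q → j ≤ k} = Set.univ := by
      ext q; simp [hjk]
    rw [this]; exact MeasurableSet.univ
  · have : {q : Fin m → ℝ | j ∈ kset m α q → j ≤ k} = {q : Fin m → ℝ | j ∈ kset m α q}ᶜ := by
      ext q; simp [hjk]
    rw [this]; exact (measSet_mem_kset j).compl

lemma meas_KfunR : Measurable (fun q : Fin m → ℝ => (Kfun m α q : ℝ)) :=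
  measurable_from_top.comp meas_Kfun

lemma meas_Tfun : Measurable (Tfun m α) := by
  unfold Tfun
  exact (meas_KfunR.const_mul α).div_const _

/-! ### The integrand -/

noncomputable def phi (m : ℕ) (α : ℝ) (x w : ℝ) : ℝ :=
  if x ≤ w ∧ α/m ≤ w ∧ w ≤ 1 then (α/m)/w else 0

lemma phi_nonneg (hm : 2 ≤ m) (hα : α ∈ Set.Ioo (0:ℝ) 1) (x w : ℝ) : 0 ≤ phi m α x w := by
  have hmpos : (0:ℝ) < m := by
    have : (2:ℝ) ≤ m := by exact_mod_cast hm
    linarith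
  unfold phi
  split_ifs with h
  · have hαm : (0:ℝ) < α / m := div_pos hα.1 hmpos
    have hw : (0:ℝ) < w := lt_of_lt_of_le hαm h.2.1
    positivity
  · exact le_refl 0

lemma phi_le_one (hm : 2 ≤ m) (hα : α ∈ Set.Ioo (0:ℝ) 1) (x w : ℝ) : phi m α x w ≤ 1 := by
  have hmpos : (0:ℝ) < m := by
    have : (2:ℝ) ≤ m := by exact_mod_cast hm
    linarith
  unfold phi
  split_ifs with h
  · have hαm : (0:ℝ) < α / m := div_pos hα.1 hmpos
    have hw : (0:ℝ) < w := lt_of_lt_of_le hαm h.2.1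
    rw [div_le_one hw]
    exact h.2.1
  · norm_num

lemma meas_phi (hm : 2 ≤ m) (hα : α ∈ Set.Ioo (0:ℝ) 1) :
    Measurable (fun z : ℝ × ℝ => phi m α z.1 z.2) := by
  unfold phi
  apply Measurable.ite _ _ measurable_const
  · exact ((measurableSet_le measurable_fst measurable_snd).inter
      (((measurableSet_le measurable_const measurable_snd)).inter
        (measurableSet_le measurable_snd measurable_const)))
  · exact measurable_const.div measurable_snd

lemma fdp_eq (hm : 2 ≤ m) (hα : α ∈ Set.Ioo (0:ℝ) 1) (H₀ : Finset (Fin m))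
    (q : Fin m → ℝ) (hq : ∀ j, q j ∈ Set.Icc (0:ℝ) 1) :
    ((Finset.univ.filter (fun i => q i ≤ tsu m α q) ∩ H₀).card : ℝ) /
      max ((Finset.univ.filter (fun i => q i ≤ tsu m α q)).card : ℝ) 1
    = ∑ i ∈ H₀, phi m α (q i) (Tfun m α (Function.update q i 0)) := by
  have hq0 : ∀ j, 0 ≤ q j := fun j => (hq j).1
  have hmpos : (0:ℝ) < m := by
    have : (2:ℝ) ≤ m := by exact_mod_cast hm
    linarith
  rw [tsu_eq hm hα]
  have hcard : (Finset.univ.filter (fun i => q i ≤ Tfun m α q)).card = Kfun m α q :=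
    cnt_Tfun hm hα q
  have hnum : (Finset.univ.filter (fun i => q i ≤ Tfun m α q) ∩ H₀)
      = H₀.filter (fun i => q i ≤ Tfun m α q) := by
    ext j
    simp only [Finset.mem_inter, Finset.mem_filter, Finset.mem_univ, true_and]
    tauto
  rw [hnum, hcard, Finset.card_filter]
  push_cast
  rw [Finset.sum_div]
  apply Finset.sum_congr rfl
  intro i _
  by_cases h : q i ≤ Tfun m α q
  · have h' : q i ≤ Tfun m α (Function.update q i 0) := (event_iff hm hα hq0).mp h
    have hKeq : Kfun m α q = Kfun m α (Function.update q i 0) := Kfun_update_eq hq0 h'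
    have hK1 : 1 ≤ Kfun m α (Function.update q i 0) := one_le_Kfun_update hm hα hq0
    have hK1R : (1:ℝ) ≤ (Kfun m α (Function.update q i 0) : ℝ) := by exact_mod_cast hK1
    have hKne : (Kfun m α (Function.update q i 0) : ℝ) ≠ 0 := by linarith
    have hTle1 : Tfun m α (Function.update q i 0) ≤ 1 := by
      have hKm : (Kfun m α (Function.update q i 0) : ℝ) ≤ m := by
        exact_mod_cast Kfun_le m α (Function.update q i 0)
      calc Tfun m α (Function.update q i 0) = α * _ / m := rfl
        _ ≤ α * m / m := by gcongr; exact hα.1.le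
        _ = α := by field_simp
        _ ≤ 1 := hα.2.le
    have hTge : α/m ≤ Tfun m α (Function.update q i 0) := by
      unfold Tfun
      rw [div_le_div_iff₀ (by positivity) hmpos]
      have : α * 1 ≤ α * (Kfun m α (Function.update q i 0) : ℝ) := by
        apply mul_le_mul_of_nonneg_left hK1R hα.1.le
      nlinarith
    rw [if_pos h]
    unfold phi
    rw [if_pos ⟨h', hTge, hTle1⟩]
    rw [hKeq]
    have : max (Kfun m α (Function.update q i 0) : ℝ) 1
        = (Kfun m α (Function.update q i 0) : ℝ) := max_eq_left hK1R
    rw [this]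
    unfold Tfun
    have hαm : (0:ℝ) < α / m := div_pos hα.1 hmpos
    rw [show α * (Kfun m α (Function.update q i 0) : ℝ) / m
        = (α / m) * (Kfun m α (Function.update q i 0) : ℝ) by ring,
      div_mul_eq_div_div, div_self hαm.ne', one_div]
  · have h' : ¬ q i ≤ Tfun m α (Function.update q i 0) :=
      fun hc => h ((event_iff hm hα hq0).mpr hc)
    rw [if_neg h]
    unfold phi
    rw [if_neg (fun hc => h' hc.1)]
    simp

end fixed

/-! ### Probabilistic lemmas -/

section prob

variable {Ω : Type*} [mΩ : MeasurableSpace Ω] {μ : Measure Ω} [IsProbabilityMeasure μ]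

lemma indep_mono {A A' B B' : MeasurableSpace Ω} (h : Indep A' B' μ)
    (hA : A ≤ A') (hB : B ≤ B') : Indep A B μ := by
  rw [Indep_iff] at h ⊢
  intro t1 t2 h1 h2
  exact h _ _ (hA _ h1) (hB _ h2)

lemma indep_glue {A B C : MeasurableSpace Ω} (hA : A ≤ mΩ) (hB : B ≤ mΩ) (hC : C ≤ mΩ)
    (hAB : Indep A B μ) (hABC : Indep (A ⊔ B) C μ) : Indep A (B ⊔ C) μ := by
  have hAB' := (Indep_iff _ _ _).mp hAB
  have hABC' := (Indep_iff _ _ _).mp hABC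
  set p1 : Set (Set Ω) := {s | MeasurableSet[A] s} with hp1def
  set p2 : Set (Set Ω) :=
    {s | ∃ b c, MeasurableSet[B] b ∧ MeasurableSet[C] c ∧ s = b ∩ c} with hp2def
  have hgen1 : A = MeasurableSpace.generateFrom p1 :=
    (@MeasurableSpace.generateFrom_measurableSet Ω A).symm
  have hgen2 : B ⊔ C = MeasurableSpace.generateFrom p2 := by
    apply le_antisymm
    · apply sup_le
      · intro s hs
        exact MeasurableSpace.measurableSet_generateFrom
          ⟨s, Set.univ, hs, MeasurableSet.univ, by simp⟩
      · intro s hs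
        exact MeasurableSpace.measurableSet_generateFrom
          ⟨Set.univ, s, MeasurableSet.univ, hs, by simp⟩
    · apply MeasurableSpace.generateFrom_le
      rintro s ⟨b, c, hb, hc, rfl⟩
      exact ((le_sup_left : B ≤ B ⊔ C) _ hb).inter ((le_sup_right : C ≤ B ⊔ C) _ hc)
  have hpi1 : IsPiSystem p1 := fun s hs t ht _ => hs.inter ht
  have hpi2 : IsPiSystem p2 := by
    rintro s ⟨b, c, hb, hc, rfl⟩ t ⟨b', c', hb', hc', rfl⟩ _
    exact ⟨b ∩ b', c ∩ c', hb.inter hb', hc.inter hc', Set.inter_inter_inter_comm b c b' c'⟩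
  have hsets : IndepSets p1 p2 μ := by
    rw [IndepSets_iff]
    rintro a s ha ⟨b, c, hb, hc, rfl⟩
    have h1 : μ (a ∩ (b ∩ c)) = μ (a ∩ b) * μ c := by
      rw [← Set.inter_assoc]
      exact hABC' _ _ (((le_sup_left : A ≤ A ⊔ B) _ ha).inter
        ((le_sup_right : B ≤ A ⊔ B) _ hb)) hc
    have h2 : μ (a ∩ b) = μ a * μ b := hAB' _ _ ha hb
    have h3 : μ (b ∩ c) = μ b * μ c := hABC' _ _ ((le_sup_right : B ≤ A ⊔ B) _ hb) hc
    rw [h1, h2, h3, mul_assoc]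
  have := IndepSets.indep' (μ := μ) (p1 := p1) (p2 := p2) (fun s hs => hA s hs)
    (fun s hs => by
      rcases hs with ⟨b, c, hb, hc, rfl⟩
      exact (hB _ hb).inter (hC _ hc)) hpi1 hpi2 hsets
  rw [← hgen1, ← hgen2] at this
  exact this

/-- comap of a coordinate is below comap of the vector map -/
lemma comap_coord_le {ι' : Type*} (f : ι' → Ω → ℝ) (j : ι') :
    MeasurableSpace.comap (f j) inferInstance
      ≤ MeasurableSpace.comap (fun ω => fun s : ι' => f s ω) MeasurableSpace.pi := by
  have h1 : f j = (fun y : ι' → ℝ => y j) ∘ (fun ω => fun s : ι' => f s ω) := rfl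
  rw [h1, ← MeasurableSpace.comap_comp]
  exact MeasurableSpace.comap_mono (measurable_pi_apply j).comap_le

variable {m : ℕ} {α : ℝ}

lemma integral_phi (hm : 2 ≤ m) (hα : α ∈ Set.Ioo (0:ℝ) 1)
    (X Wf : Ω → ℝ) (hX : Measurable X) (hW : Measurable Wf)
    (hWlb : ∀ ω, α/m ≤ Wf ω) (hWub : ∀ ω, Wf ω ≤ 1)
    (hunif : ∀ u ∈ Set.Icc (0:ℝ) 1, (μ {ω | X ω ≤ u}).toReal = u)
    (hind : IndepFun X Wf μ) :
    ∫ ω, phi m α (X ω) (Wf ω) ∂μ = α/m := by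
  have hmpos : (0:ℝ) < m := by
    have : (2:ℝ) ≤ m := by exact_mod_cast hm
    linarith
  have hαm : (0:ℝ) < α / m := div_pos hα.1 hmpos
  haveI : IsProbabilityMeasure (μ.map X) := Measure.isProbabilityMeasure_map hX.aemeasurable
  haveI : IsProbabilityMeasure (μ.map Wf) := Measure.isProbabilityMeasure_map hW.aemeasurable
  have hmap := (indepFun_iff_map_prod_eq_prod_map_map hX.aemeasurable hW.aemeasurable).mp hind
  have hphi : Measurable (fun z : ℝ × ℝ => phi m α z.1 z.2) := meas_phi hm hα
  have hbound : ∀ z : ℝ × ℝ, ‖phi m α z.1 z.2‖ ≤ 1 := by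
    intro z
    rw [Real.norm_eq_abs, abs_le]
    exact ⟨by linarith [phi_nonneg hm hα z.1 z.2], phi_le_one hm hα z.1 z.2⟩
  have hint : Integrable (fun z : ℝ × ℝ => phi m α z.1 z.2) ((μ.map X).prod (μ.map Wf)) := by
    apply Integrable.mono' (integrable_const (1:ℝ)) hphi.aestronglyMeasurable
    exact Filter.Eventually.of_forall hbound
  have hg : Measurable (fun w : ℝ => if α/m ≤ w ∧ w ≤ 1 then α/m else 0) := by
    apply Measurable.ite _ measurable_const measurable_const
    exact (measurableSet_le measurable_const measurable_id).inter
      (measurableSet_le measurable_id measurable_const)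
  have hinner : ∀ w : ℝ, ∫ x, phi m α x w ∂(μ.map X)
      = if α/m ≤ w ∧ w ≤ 1 then α/m else 0 := by
    intro w
    by_cases hw : α/m ≤ w ∧ w ≤ 1
    · have hw0 : (0:ℝ) < w := lt_of_lt_of_le hαm hw.1
      have heq : (fun x => phi m α x w)
          = Set.indicator (Set.Iic w) (fun _ => (α/m)/w) := by
        funext x
        rw [Set.indicator_apply]
        unfold phi
        by_cases hx : x ≤ w
        · rw [if_pos ⟨hx, hw.1, hw.2⟩, if_pos (Set.mem_Iic.mpr hx)]
        · rw [if_neg (fun hc => hx hc.1), if_neg (fun hc => hx (Set.mem_Iic.mp hc))]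
      rw [if_pos hw, heq, integral_indicator_const _ measurableSet_Iic]
      have hmeasure : ((μ.map X) (Set.Iic w)).toReal = w := by
        rw [Measure.map_apply hX measurableSet_Iic]
        have : X ⁻¹' Set.Iic w = {ω | X ω ≤ w} := rfl
        rw [this]
        exact hunif w ⟨le_trans hαm.le hw.1, hw.2⟩
      rw [smul_eq_mul, measureReal_def, hmeasure]
      field_simp
    · rw [if_neg hw]
      have heq : (fun x => phi m α x w) = fun _ => (0:ℝ) := by
        funext x
        unfold phi
        rw [if_neg (fun hc => hw ⟨hc.2.1, hc.2.2⟩)]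
      rw [heq, integral_zero]
  calc ∫ ω, phi m α (X ω) (Wf ω) ∂μ
      = ∫ z, phi m α z.1 z.2 ∂(μ.map (fun ω => (X ω, Wf ω))) :=
        (integral_map (hX.prodMk hW).aemeasurable hphi.aestronglyMeasurable).symm
    _ = ∫ z, phi m α z.1 z.2 ∂((μ.map X).prod (μ.map Wf)) := by rw [hmap]
    _ = ∫ w, ∫ x, phi m α x w ∂(μ.map X) ∂(μ.map Wf) := integral_prod_symm _ hint
    _ = ∫ w, (if α/m ≤ w ∧ w ≤ 1 then α/m else 0) ∂(μ.map Wf) := by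
        apply integral_congr_ae
        exact Filter.Eventually.of_forall hinner
    _ = ∫ ω, (if α/m ≤ Wf ω ∧ Wf ω ≤ 1 then α/m else 0) ∂μ :=
        integral_map hW.aemeasurable hg.aestronglyMeasurable
    _ = ∫ _ω, (α/m : ℝ) ∂μ := by
        apply integral_congr_ae
        apply Filter.Eventually.of_forall
        intro ω
        exact if_pos ⟨hWlb ω, hWub ω⟩
    _ = α/m := by simp

end prob

/-! ### sigma-algebras for the leave-one-out argument -/

section sigma
variable {Ω : Type*} {m : ℕ}

/-- sigma algebra of a single p-value -/
def sA (p : Fin m → Ω → ℝ) (i : Fin m) : MeasurableSpace Ω :=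
  MeasurableSpace.comap (p i) Real.measurableSpace

/-- sigma algebra of the other nulls -/
def sB (p : Fin m → Ω → ℝ) (H₀ : Finset (Fin m)) (i : Fin m) : MeasurableSpace Ω :=
  ⨆ j ∈ ((H₀ : Set (Fin m)) \ {i}), sA p j

/-- sigma algebra of the alternatives -/
def sC (p : Fin m → Ω → ℝ) (H₀ : Finset (Fin m)) : MeasurableSpace Ω :=
  MeasurableSpace.comap (fun ω => fun k : {k // k ∉ H₀} => p k.1 ω) MeasurableSpace.pi

/-- sigma algebra of everything except coordinate i -/
def sM (p : Fin m → Ω → ℝ) (i : Fin m) : MeasurableSpace Ω :=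
  ⨆ j ∈ ({i}ᶜ : Set (Fin m)), sA p j

variable [mΩ : MeasurableSpace Ω] {μ : Measure Ω} [IsProbabilityMeasure μ] {α : ℝ}

lemma indepFun_loo (p : Fin m → Ω → ℝ) (hmeas : ∀ i, Measurable (p i))
    (H₀ : Finset (Fin m)) (i : Fin m) (hi : i ∈ H₀)
    (hindep₀ : iIndepFun
      (fun i : {i // i ∈ H₀} => p i.1) μ)
    (hindep₁ : IndepFun (fun ω => fun i : {i // i ∈ H₀} => p i.1 ω)
      (fun ω => fun i : {i // i ∉ H₀} => p i.1 ω) μ) :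
    IndepFun (p i) (fun ω => Tfun m α (Function.update (fun j => p j ω) i 0)) μ := by
  classical
  have hsA_le : ∀ j, sA p j ≤ mΩ := fun j => (hmeas j).comap_le
  have hB_le : sB p H₀ i ≤ mΩ := iSup₂_le fun j _ => hsA_le j
  have hC_le : sC p H₀ ≤ mΩ :=
    (measurable_pi_lambda (fun ω => fun k : {k // k ∉ H₀} => p k.1 ω)
      (fun k => hmeas k.1)).comap_le
  have hAB : Indep (sA p i) (sB p H₀ i) μ := by
    have hbig := indep_iSup_of_disjoint (m := fun x : {k // k ∈ H₀} => sA p x.1)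
      (fun x => hsA_le x.1) hindep₀.iIndep
      (S := {(⟨i, hi⟩ : {k // k ∈ H₀})}) (T := {(⟨i, hi⟩ : {k // k ∈ H₀})}ᶜ)
      disjoint_compl_right
    apply indep_mono hbig
    · exact le_iSup₂ (f := fun (x : {k // k ∈ H₀})
        (_ : x ∈ ({(⟨i, hi⟩ : {k // k ∈ H₀})} : Set {k // k ∈ H₀})) => sA p x.1)
        ⟨i, hi⟩ rfl
    · apply iSup₂_le
      intro j hj
      have hjH : j ∈ H₀ := Finset.mem_coe.mp hj.1
      have hjne : j ≠ i := hj.2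
      refine le_iSup₂ (f := fun (x : {k // k ∈ H₀})
        (_ : x ∈ ({(⟨i, hi⟩ : {k // k ∈ H₀})}ᶜ : Set {k // k ∈ H₀})) => sA p x.1)
        ⟨j, hjH⟩ ?_
      simp only [Set.mem_compl_iff, Set.mem_singleton_iff]
      intro hc
      exact hjne (congrArg Subtype.val hc)
  have hABC : Indep (sA p i ⊔ sB p H₀ i) (sC p H₀) μ := by
    have h1 : Indep (MeasurableSpace.comap
        (fun ω => fun k : {k // k ∈ H₀} => p k.1 ω) MeasurableSpace.pi) (sC p H₀) μ :=
      (IndepFun_iff_Indep _ _ μ).mp hindep₁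
    apply indep_mono h1 _ le_rfl
    apply sup_le
    · exact comap_coord_le (fun x : {k // k ∈ H₀} => p x.1) ⟨i, hi⟩
    · apply iSup₂_le
      intro j hj
      exact comap_coord_le (fun x : {k // k ∈ H₀} => p x.1) ⟨j, Finset.mem_coe.mp hj.1⟩
  have hglue : Indep (sA p i) (sB p H₀ i ⊔ sC p H₀) μ :=
    indep_glue (hsA_le i) hB_le hC_le hAB hABC
  have hM_le : sM p i ≤ sB p H₀ i ⊔ sC p H₀ := by
    apply iSup₂_le
    intro j hj
    have hjne : j ≠ i := hj
    by_cases hjH : j ∈ H₀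
    · exact le_trans (le_iSup₂ (f := fun (j : Fin m)
        (_ : j ∈ ((H₀ : Set (Fin m)) \ {i})) => sA p j) j
        ⟨Finset.mem_coe.mpr hjH, hjne⟩) le_sup_left
    · exact le_trans (comap_coord_le (fun k : {k // k ∉ H₀} => p k.1) ⟨j, hjH⟩) le_sup_right
  have hWM : Measurable[sM p i]
      (fun ω => Tfun m α (Function.update (fun j => p j ω) i 0)) := by
    have hcoord : ∀ j, Measurable[sM p i]
        (fun ω => Function.update (fun k => p k ω) i 0 j) := by
      intro j
      by_cases hji : j = i
      · subst hji
        simp only [Function.update_self]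
        exact measurable_const
      · simp only [Function.update_of_ne hji]
        have hle : sA p j ≤ sM p i := le_iSup₂ (f := fun (j : Fin m)
          (_ : j ∈ ({i}ᶜ : Set (Fin m))) => sA p j) j hji
        exact measurable_iff_comap_le.mpr hle
    have hY : Measurable[sM p i] (fun ω => Function.update (fun j => p j ω) i 0) :=
      @measurable_pi_lambda Ω (Fin m) (fun _ => ℝ) (sM p i) (fun _ => Real.measurableSpace)
        _ hcoord
    exact (meas_Tfun (m := m) (α := α)).comp hY
  rw [IndepFun_iff_Indep]
  exact indep_mono hglue le_rfl (le_trans (measurable_iff_comap_le.mp hWM) hM_le)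

end sigma
end BHproof

theorem stmt10 {Ω : Type*} [MeasurableSpace Ω] (μ : Measure Ω) [IsProbabilityMeasure μ]
    (m : ℕ) (hm : 2 ≤ m) (α : ℝ) (hα : α ∈ Set.Ioo (0:ℝ) 1)
    (p : Fin m → Ω → ℝ) (hmeas : ∀ i, Measurable (p i))
    (hval : ∀ i ω, p i ω ∈ Set.Icc (0:ℝ) 1)
    (H₀ : Finset (Fin m))
    -- exact uniformity of the null p-values
    (hnull : ∀ i ∈ H₀, ∀ u ∈ Set.Icc (0:ℝ) 1, (μ {ω | p i ω ≤ u}).toReal = u)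
    -- mutual independence of the null p-values
    (hindep₀ : iIndepFun
      (fun i : {i // i ∈ H₀} => p i.1) μ)
    -- independence of the null family from the alternative family
    (hindep₁ : IndepFun (fun ω => fun i : {i // i ∈ H₀} => p i.1 ω)
      (fun ω => fun i : {i // i ∉ H₀} => p i.1 ω) μ) :
    ∫ ω, ((Finset.univ.filter (fun i => p i ω ≤ tsu m α (fun j => p j ω)) ∩ H₀).card : ℝ) /
        max ((Finset.univ.filter (fun i => p i ω ≤ tsu m α (fun j => p j ω))).card : ℝ) 1 ∂μ
      = α * H₀.card / m := by
  classical
  have hmpos : (0:ℝ) < m := by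
    have : (2:ℝ) ≤ m := by exact_mod_cast hm
    linarith
  set W : Fin m → Ω → ℝ :=
    fun i ω => BHproof.Tfun m α (Function.update (fun j => p j ω) i 0) with hWdef
  have hYmeas : ∀ i : Fin m, Measurable (fun ω => Function.update (fun j => p j ω) i 0) := by
    intro i
    apply measurable_pi_lambda
    intro j
    by_cases hji : j = i
    · subst hji; simp only [Function.update_self]; exact measurable_const
    · simp only [Function.update_of_ne hji]; exact hmeas j
  have hWmeas : ∀ i, Measurable (W i) := fun i => (BHproof.meas_Tfun).comp (hYmeas i)
  have hq0 : ∀ ω j, 0 ≤ p j ω := fun ω j => (hval j ω).1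
  have hK1 : ∀ i ω, 1 ≤ BHproof.Kfun m α (Function.update (fun j => p j ω) i 0) :=
    fun i ω => BHproof.one_le_Kfun_update hm hα (hq0 ω)
  have hWlb : ∀ i ω, α / m ≤ W i ω := by
    intro i ω
    have h1R : (1:ℝ) ≤ (BHproof.Kfun m α (Function.update (fun j => p j ω) i 0) : ℝ) := by
      exact_mod_cast hK1 i ω
    calc α / m = α * 1 / m := by ring
      _ ≤ α * (BHproof.Kfun m α (Function.update (fun j => p j ω) i 0) : ℝ) / m := by
          gcongr
          exact hα.1.le
      _ = W i ω := rfl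
  have hWub : ∀ i ω, W i ω ≤ 1 := by
    intro i ω
    have hKm : (BHproof.Kfun m α (Function.update (fun j => p j ω) i 0) : ℝ) ≤ m := by
      exact_mod_cast BHproof.Kfun_le m α _
    calc W i ω = α * (BHproof.Kfun m α (Function.update (fun j => p j ω) i 0) : ℝ) / m := rfl
      _ ≤ α * m / m := by gcongr; exact hα.1.le
      _ = α := by field_simp
      _ ≤ 1 := hα.2.le
  have hindepW : ∀ i ∈ H₀, IndepFun (p i) (W i) μ := fun i hi =>
    BHproof.indepFun_loo p hmeas H₀ i hi hindep₀ hindep₁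
  have hptw : ∀ ω,
      ((Finset.univ.filter (fun i => p i ω ≤ tsu m α (fun j => p j ω)) ∩ H₀).card : ℝ) /
        max ((Finset.univ.filter (fun i => p i ω ≤ tsu m α (fun j => p j ω))).card : ℝ) 1
      = ∑ i ∈ H₀, BHproof.phi m α (p i ω) (W i ω) := by
    intro ω
    exact BHproof.fdp_eq hm hα H₀ (fun j => p j ω) (fun j => hval j ω)
  have hint : ∀ i ∈ H₀,
      Integrable (fun ω => BHproof.phi m α (p i ω) (W i ω)) μ := by
    intro i _
    apply Integrable.mono' (integrable_const (1:ℝ))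
    · exact ((BHproof.meas_phi hm hα).comp
        ((hmeas i).prodMk (hWmeas i))).aestronglyMeasurable
    · apply Filter.Eventually.of_forall
      intro ω
      rw [Real.norm_eq_abs, abs_le]
      exact ⟨by linarith [BHproof.phi_nonneg hm hα (p i ω) (W i ω)],
        BHproof.phi_le_one hm hα (p i ω) (W i ω)⟩
  have h2 : ∫ ω, (∑ i ∈ H₀, BHproof.phi m α (p i ω) (W i ω)) ∂μ = α * H₀.card / m := by
    rw [integral_finset_sum H₀ hint]
    have hterm : ∀ i ∈ H₀,
        ∫ ω, BHproof.phi m α (p i ω) (W i ω) ∂μ = α / m := by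
      intro i hi
      exact BHproof.integral_phi hm hα (p i) (W i) (hmeas i) (hWmeas i)
        (hWlb i) (hWub i) (hnull i hi) (hindepW i hi)
    rw [Finset.sum_congr rfl hterm, Finset.sum_const, nsmul_eq_mul]
    ring
  exact (integral_congr_ae (Filter.Eventually.of_forall hptw)).trans h2
end

section
/- Fix λ ∈ (0,1) and m ≥ 1. Define the Storey-type estimator f₁(p) = m(1−λ)/(Σᵢ 1{p_i > λ} + 1). For any m₀ ∈ {1,…,m}, if p is distributed according to the Dirac-uniform configuration DU(m₀−1, m) (first m₀−1 coordinates i.i.d. uniform on (0,1), remaining coordinates equal to 0), then E[f₁(p)] ≤ m/m₀. -/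
open MeasureTheory ProbabilityTheory

lemma my_integral_prod {Ω : Type*} [MeasurableSpace Ω] (μ : Measure Ω) [IsProbabilityMeasure μ]
    {ι : Type*} (f : ι → Ω → ℝ)
    (hindep : iIndepFun f μ)
    (hmeas : ∀ i, Measurable (f i)) (s : Finset ι) :
    ∫ ω, ∏ i ∈ s, f i ω ∂μ = ∏ i ∈ s, ∫ ω, f i ω ∂μ := by
  classical
  induction s using Finset.induction with
  | empty => simp
  | @insert a s ha ih =>
    have hps : Measurable (fun ω => ∏ j ∈ s, f j ω) :=
      Finset.measurable_prod s fun i _ => hmeas i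
    have h1 : IndepFun (∏ j ∈ s, f j) (f a) μ :=
      hindep.indepFun_finset_prod_of_notMem hmeas ha
    have hprod_eq : (∏ j ∈ s, f j) = fun ω => ∏ j ∈ s, f j ω := by
      funext ω; simp [Finset.prod_apply]
    have h2 := h1.integral_mul_eq_mul_integral
      (by rw [hprod_eq]; exact hps.aestronglyMeasurable) (hmeas a).aestronglyMeasurable
    rw [hprod_eq] at h2
    simp only [Finset.prod_insert ha]
    rw [← ih]
    calc ∫ ω, f a ω * ∏ i ∈ s, f i ω ∂μ
        = ∫ ω, ((fun ω => ∏ j ∈ s, f j ω) * f a) ω ∂μ := by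
          congr 1; funext ω; simp [mul_comm]
      _ = (∫ ω, ∏ j ∈ s, f j ω ∂μ) * ∫ ω, f a ω ∂μ := h2
      _ = (∫ ω, f a ω ∂μ) * ∫ ω, ∏ i ∈ s, f i ω ∂μ := mul_comm _ _

lemma my_factor_integral {lam t : ℝ} (h0 : 0 < lam) (h1 : lam < 1) :
    ∫ x in Set.Ioo (0:ℝ) 1, (if lam < x then t else 1) = lam + (1 - lam) * t := by
  have hsplit : Set.Ioo (0:ℝ) 1 = Set.Ioc 0 lam ∪ Set.Ioo lam 1 := by
    ext x
    simp only [Set.mem_Ioo, Set.mem_union, Set.mem_Ioc]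
    constructor
    · rintro ⟨hx0, hx1⟩
      rcases le_or_gt x lam with h | h
      · exact Or.inl ⟨hx0, h⟩
      · exact Or.inr ⟨h, hx1⟩
    · rintro (⟨hx0, hx⟩ | ⟨hx, hx1⟩)
      · exact ⟨hx0, lt_of_le_of_lt hx h1⟩
      · exact ⟨lt_trans h0 hx, hx1⟩
  have hdisj : Disjoint (Set.Ioc (0:ℝ) lam) (Set.Ioo lam 1) := by
    apply Set.disjoint_left.mpr
    rintro x ⟨_, hx⟩ ⟨hx', _⟩
    exact absurd hx' (not_lt.mpr hx)
  have hint1 : IntegrableOn (fun x => if lam < x then t else 1) (Set.Ioc (0:ℝ) lam) := by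
    apply Integrable.mono' (integrable_const (max |t| 1))
    · exact ((measurable_const.ite (measurableSet_Ioi.preimage measurable_id) measurable_const)).aestronglyMeasurable
    · filter_upwards with x
      by_cases h : lam < x <;> simp [h, le_max_left, le_max_right, abs_le, le_abs_self, neg_abs_le]
  have hint2 : IntegrableOn (fun x => if lam < x then t else 1) (Set.Ioo lam 1) := by
    apply Integrable.mono' (integrable_const (max |t| 1))
    · exact ((measurable_const.ite (measurableSet_Ioi.preimage measurable_id) measurable_const)).aestronglyMeasurable
    · filter_upwards with x
      by_cases h : lam < x <;> simp [h, le_max_left, le_max_right, abs_le, le_abs_self, neg_abs_le]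
  rw [hsplit, setIntegral_union hdisj measurableSet_Ioo hint1 hint2]
  have e1 : ∫ x in Set.Ioc (0:ℝ) lam, (if lam < x then t else 1) = lam := by
    rw [setIntegral_congr_fun measurableSet_Ioc (fun x hx => by
      simp only [Set.mem_Ioc] at hx
      rw [if_neg (not_lt.mpr hx.2)])]
    simp [Real.volume_Ioc, h0.le]
  have e2 : ∫ x in Set.Ioo lam 1, (if lam < x then t else 1) = (1 - lam) * t := by
    rw [setIntegral_congr_fun measurableSet_Ioo (fun x hx => by
      simp only [Set.mem_Ioo] at hx
      rw [if_pos hx.1])]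
    simp [Real.volume_Ioo, h1.le, mul_comm]
  rw [e1, e2]

lemma my_pow_integral (n : ℕ) :
    ∫ x in Set.Ioo (0:ℝ) 1, x ^ n = 1 / (n + 1) := by
  rw [← integral_Ioc_eq_integral_Ioo, ← intervalIntegral.integral_of_le (by norm_num : (0:ℝ) ≤ 1)]
  rw [integral_pow]
  simp

lemma my_affine_integral {lam : ℝ} (h0 : 0 < lam) (h1 : lam < 1) (k : ℕ) :
    ∫ t in Set.Ioo (0:ℝ) 1, (lam + (1 - lam) * t) ^ k
      = (1 - lam ^ (k + 1)) / ((1 - lam) * (k + 1)) := by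
  have hq : (1 : ℝ) - lam ≠ 0 := by linarith
  rw [← integral_Ioc_eq_integral_Ioo, ← intervalIntegral.integral_of_le (by norm_num : (0:ℝ) ≤ 1)]
  have := intervalIntegral.integral_comp_mul_add (a := (0:ℝ)) (b := 1)
    (f := fun u => u ^ k) hq lam
  simp only [mul_zero, zero_add, mul_one] at this
  have heq : ∀ x : ℝ, (lam + (1 - lam) * x) ^ k = ((1 - lam) * x + lam) ^ k := by
    intro x; ring_nf
  simp only [heq]
  rw [this, integral_pow]
  have : (1 - lam) + lam = 1 := by ring
  rw [this]
  rw [smul_eq_mul]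
  field_simp
  simp

lemma my_card_filter (m k : ℕ) (h : k ≤ m) :
    (Finset.univ.filter (fun i : Fin m => (i : ℕ) < k)).card = k := by
  rw [Finset.card_filter, Fin.sum_univ_eq_sum_range (fun j => if j < k then 1 else 0),
    ← Finset.card_filter]
  have : Finset.filter (fun x => x < k) (Finset.range m) = Finset.range k := by
    ext x
    simp only [Finset.mem_filter, Finset.mem_range]
    exact ⟨fun hx => hx.2, fun hx => ⟨lt_of_lt_of_le hx h, hx⟩⟩
  rw [this, Finset.card_range]

theorem stmt12 {Ω : Type*} [MeasurableSpace Ω] (μ : Measure Ω) [IsProbabilityMeasure μ]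
    (m m₀ : ℕ) (hm₀ : 1 ≤ m₀) (hm : m₀ ≤ m)
    (lam : ℝ) (hlam : lam ∈ Set.Ioo (0:ℝ) 1)
    (p : Fin m → Ω → ℝ) (hmeas : ∀ i, Measurable (p i))
    (hindep : iIndepFun p μ)
    -- the first m₀ - 1 coordinates are uniform on (0,1)
    (hunif : ∀ i : Fin m, (i : ℕ) < m₀ - 1 → μ.map (p i) = volume.restrict (Set.Ioo (0:ℝ) 1))
    -- the remaining coordinates are 0
    (hzero : ∀ i : Fin m, m₀ - 1 ≤ (i : ℕ) → ∀ ω, p i ω = 0) :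
    ∫ ω, (m * (1 - lam)) /
        (((Finset.univ.filter (fun i => lam < p i ω)).card : ℝ) + 1) ∂μ
      ≤ m / m₀ := by
  classical
  obtain ⟨hl0, hl1⟩ := hlam
  set k := m₀ - 1 with hk
  have hkm : k ≤ m := le_trans (Nat.sub_le _ _) hm
  have hk1 : k + 1 = m₀ := Nat.succ_pred_eq_of_pos hm₀
  have hq0 : (0:ℝ) < 1 - lam := by linarith
  set N : Ω → ℕ := fun ω => (Finset.univ.filter (fun i => lam < p i ω)).card with hN
  set ν : Measure ℝ := volume.restrict (Set.Ioo 0 1) with hν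
  haveI : IsFiniteMeasure ν := by
    constructor
    rw [hν, Measure.restrict_apply MeasurableSet.univ, Set.univ_inter, Real.volume_Ioo]
    norm_num
  set G : Ω → ℝ → ℝ := fun ω t => ∏ i : Fin m, (if lam < p i ω then t else 1) with hG
  -- Claim A
  have hA : ∀ ω, ∫ t, G ω t ∂ν = ((N ω : ℝ) + 1)⁻¹ := by
    intro ω
    have hGt : ∀ t : ℝ, G ω t = t ^ (N ω) := by
      intro t
      rw [hG]
      simp only
      rw [Finset.prod_ite, Finset.prod_const, Finset.prod_const_one, mul_one]
    simp only [hGt, hν]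
    rw [my_pow_integral (N ω), one_div]
  -- Claim B
  have hB : ∀ t : ℝ, ∫ ω, G ω t ∂μ = (lam + (1 - lam) * t) ^ k := by
    intro t
    set g : ℝ → ℝ := fun x => if lam < x then t else 1 with hg
    have hgmeas : Measurable g :=
      measurable_const.ite (measurableSet_Ioi.preimage measurable_id) measurable_const
    have hfind : iIndepFun
        (fun i => g ∘ p i) μ := hindep.comp (fun _ => g) (fun _ => hgmeas)
    have := my_integral_prod μ (fun i => g ∘ p i) hfind
      (fun i => hgmeas.comp (hmeas i)) Finset.univ
    have hGeq : (fun ω => G ω t) = fun ω => ∏ i : Fin m, (g ∘ p i) ω := by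
      funext ω; rfl
    rw [hGeq, this]
    have hval : ∀ i : Fin m, ∫ ω, (g ∘ p i) ω ∂μ
        = if (i : ℕ) < k then lam + (1 - lam) * t else 1 := by
      intro i
      by_cases hi : (i : ℕ) < k
      · rw [if_pos hi]
        have hmap := hunif i hi
        calc ∫ ω, (g ∘ p i) ω ∂μ = ∫ x, g x ∂(μ.map (p i)) := by
              rw [integral_map (hmeas i).aemeasurable hgmeas.aestronglyMeasurable]
              rfl
          _ = ∫ x in Set.Ioo (0:ℝ) 1, g x := by rw [hmap]
          _ = lam + (1 - lam) * t := my_factor_integral hl0 hl1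
      · rw [if_neg hi]
        have : ∀ ω, (g ∘ p i) ω = 1 := by
          intro ω
          simp only [Function.comp, hg, hzero i (not_lt.mp hi) ω]
          rw [if_neg (not_lt.mpr hl0.le)]
        simp only [this]
        simp
    rw [Finset.prod_congr rfl (fun i _ => hval i)]
    rw [Finset.prod_ite, Finset.prod_const, Finset.prod_const_one, mul_one,
      my_card_filter m k hkm]
  -- Fubini
  have hGuncurry : Measurable (Function.uncurry G) := by
    apply Finset.measurable_prod
    intro i _
    exact Measurable.ite
      ((measurableSet_Ioi.preimage ((hmeas i).comp measurable_fst)))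
      measurable_snd measurable_const
  have haesnd : ∀ᵐ z ∂(μ.prod ν), z.2 ∈ Set.Ioo (0:ℝ) 1 := by
    rw [ae_iff]
    have hsub : {z : Ω × ℝ | ¬ z.2 ∈ Set.Ioo (0:ℝ) 1} ⊆ Set.univ ×ˢ (Set.Ioo (0:ℝ) 1)ᶜ :=
      fun z hz => ⟨trivial, hz⟩
    refine measure_mono_null hsub ?_
    rw [Measure.prod_prod, hν, Measure.restrict_apply (measurableSet_Ioo.compl)]
    simp
  have hint : Integrable (Function.uncurry G) (μ.prod ν) := by
    apply Integrable.mono' (integrable_const (1:ℝ)) hGuncurry.aestronglyMeasurable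
    filter_upwards [haesnd] with z hz
    have h0G : 0 ≤ G z.1 z.2 := by
      apply Finset.prod_nonneg
      intro i _
      by_cases h : lam < p i z.1 <;> simp [h, hz.1.le, le_of_lt hz.1]
    have h1G : G z.1 z.2 ≤ 1 := by
      apply Finset.prod_le_one
      · intro i _
        by_cases h : lam < p i z.1 <;> simp [h, hz.1.le]
      · intro i _
        by_cases h : lam < p i z.1 <;> simp [h, hz.2.le]
    show ‖G z.1 z.2‖ ≤ 1
    rw [Real.norm_of_nonneg h0G]
    exact h1G
  have hswap : ∫ ω, ∫ t, G ω t ∂ν ∂μ = ∫ t, ∫ ω, G ω t ∂μ ∂ν :=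
    integral_integral_swap hint
  have key : ∫ ω, ((N ω : ℝ) + 1)⁻¹ ∂μ = (1 - lam ^ (k + 1)) / ((1 - lam) * (k + 1)) := by
    calc ∫ ω, ((N ω : ℝ) + 1)⁻¹ ∂μ = ∫ ω, ∫ t, G ω t ∂ν ∂μ := by
          congr 1; funext ω; rw [hA ω]
      _ = ∫ t, ∫ ω, G ω t ∂μ ∂ν := hswap
      _ = ∫ t in Set.Ioo (0:ℝ) 1, (lam + (1 - lam) * t) ^ k := by
          rw [hν]; congr 1; funext t; rw [hB t]
      _ = (1 - lam ^ (k + 1)) / ((1 - lam) * (k + 1)) := my_affine_integral hl0 hl1 k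
  -- assemble
  have hrw : ∀ ω, ((m : ℝ) * (1 - lam)) /
      (((Finset.univ.filter (fun i => lam < p i ω)).card : ℝ) + 1)
      = ((m : ℝ) * (1 - lam)) * ((N ω : ℝ) + 1)⁻¹ := by
    intro ω; rw [div_eq_mul_inv]
  calc ∫ ω, ((m : ℝ) * (1 - lam)) /
        (((Finset.univ.filter (fun i => lam < p i ω)).card : ℝ) + 1) ∂μ
      = ((m : ℝ) * (1 - lam)) * ∫ ω, ((N ω : ℝ) + 1)⁻¹ ∂μ := by
        simp only [hrw]; rw [integral_const_mul]
    _ = ((m : ℝ) * (1 - lam)) * ((1 - lam ^ (k + 1)) / ((1 - lam) * (k + 1))) := by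
        rw [key]
    _ = (m : ℝ) * (1 - lam ^ m₀) / m₀ := by
        have hm₀' : ((k : ℝ) + 1) = (m₀ : ℝ) := by
          rw [← hk1]; push_cast; ring
        rw [hm₀', ← hk1]
        have hm₀pos : (0:ℝ) < m₀ := by exact_mod_cast hm₀
        field_simp
    _ ≤ (m : ℝ) / m₀ := by
        have hm₀pos : (0:ℝ) < m₀ := by exact_mod_cast hm₀
        have hpow : 0 ≤ lam ^ m₀ := pow_nonneg hl0.le _
        have hnum : (m : ℝ) * (1 - lam ^ m₀) ≤ (m : ℝ) := by
          have : (0:ℝ) ≤ (m:ℝ) := Nat.cast_nonneg m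
          nlinarith
        exact div_le_div_of_nonneg_right hnum hm₀pos.le
end

section
/- Fix k₀ ∈ {1,…,m}. Define the quantile-type estimator f₂(p) = m(1−p₍ₖ₀₎)/(m−k₀+1), where p₍ₖ₀₎ is the k₀-th smallest coordinate of p. For any m₀ ∈ {1,…,m}, if p ~ DU(m₀−1, m), then E[f₂(p)] ≤ m/m₀. -/
open MeasureTheory ProbabilityTheory

lemma ascfact (a b : ℕ) : a.factorial * ∏ j ∈ Finset.range (b+1), (a+1+j) = (a+b+1).factorial := by
  induction b with
  | zero => simp [Nat.factorial_succ]; ring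
  | succ b ih =>
    rw [Finset.prod_range_succ, ← mul_assoc, ih]
    have h2 : a + (b+1) + 1 = (a+b+1) + 1 := by ring
    rw [h2, Nat.factorial_succ (a+b+1)]
    ring

lemma beta_nat (a b : ℕ) :
    ∫ x in (0:ℝ)..1, x ^ a * (1 - x) ^ b
      = (a.factorial : ℝ) * b.factorial / (a + b + 1).factorial := by
  have key := Complex.betaIntegral_eval_nat_add_one_right (u := (a:ℂ) + 1)
    (by simp; positivity) b
  have h1 : Complex.betaIntegral ((a:ℂ)+1) ((b:ℂ)+1)
      = ((∫ x in (0:ℝ)..1, x ^ a * (1 - x) ^ b : ℝ) : ℂ) := by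
    rw [Complex.betaIntegral, ← intervalIntegral.integral_ofReal]
    apply intervalIntegral.integral_congr
    intro x _
    show (x:ℂ) ^ ((a:ℂ)+1-1) * (1-(x:ℂ)) ^ ((b:ℂ)+1-1) = ((x ^ a * (1 - x) ^ b : ℝ) : ℂ)
    rw [add_sub_cancel_right, add_sub_cancel_right, Complex.cpow_natCast, Complex.cpow_natCast]
    push_cast
    ring
  have hPnat : (∏ j ∈ Finset.range (b+1), ((a:ℂ)+1+(j:ℂ)))
      = ((∏ j ∈ Finset.range (b+1), (a+1+j) : ℕ) : ℂ) := by
    push_cast; rfl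
  rw [h1, hPnat] at key
  have hfc : (((a+b+1).factorial : ℕ) : ℂ)
      = ((a.factorial : ℕ) : ℂ) * ((∏ j ∈ Finset.range (b+1), (a+1+j) : ℕ) : ℂ) := by
    exact_mod_cast congrArg (Nat.cast : ℕ → ℂ) (ascfact a b).symm
  have hane : ((a.factorial : ℕ) : ℂ) ≠ 0 := by exact_mod_cast (Nat.factorial_pos a).ne'
  have : ((∫ x in (0:ℝ)..1, x ^ a * (1 - x) ^ b : ℝ) : ℂ)
      = (((a.factorial : ℝ) * b.factorial / (a + b + 1).factorial : ℝ) : ℂ) := by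
    rw [key, Complex.ofReal_div, Complex.ofReal_mul, Complex.ofReal_natCast,
      Complex.ofReal_natCast, Complex.ofReal_natCast, hfc, mul_div_mul_left _ _ hane]
  exact_mod_cast this

lemma lint_beta (a b : ℕ) :
    ∫⁻ t in Set.Ioo (0:ℝ) 1, ENNReal.ofReal t ^ a * ENNReal.ofReal (1-t) ^ b
      = ENNReal.ofReal ((a.factorial * b.factorial : ℝ) / (a+b+1).factorial) := by
  have hcong : ∀ t ∈ Set.Ioo (0:ℝ) 1, ENNReal.ofReal t ^ a * ENNReal.ofReal (1-t) ^ b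
      = ENNReal.ofReal (t^a * (1-t)^b) := by
    intro t ht
    rw [ENNReal.ofReal_mul (pow_nonneg ht.1.le a), ENNReal.ofReal_pow ht.1.le,
      ENNReal.ofReal_pow (by linarith [ht.2] : (0:ℝ) ≤ 1 - t)]
  rw [setLIntegral_congr_fun measurableSet_Ioo hcong]
  have hcont : Continuous (fun t : ℝ => t^a * (1-t)^b) := by fun_prop
  rw [← ofReal_integral_eq_lintegral_ofReal]
  · congr 1
    rw [← MeasureTheory.integral_Ioc_eq_integral_Ioo,
      ← intervalIntegral.integral_of_le zero_le_one, beta_nat]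
  · exact ((hcont.continuousOn).integrableOn_compact isCompact_Icc).mono_set
      Set.Ioo_subset_Icc_self
  · refine (ae_restrict_iff' measurableSet_Ioo).2 (ae_of_all _ fun t ht => ?_)
    exact mul_nonneg (pow_nonneg ht.1.le _) (pow_nonneg (by linarith [ht.2]) _)

theorem stmt13 {Ω : Type*} [MeasurableSpace Ω] (μ : Measure Ω) [IsProbabilityMeasure μ]
    (m m₀ : ℕ) (hm₀ : 1 ≤ m₀) (hm : m₀ ≤ m)
    (k₀ : ℕ) (hk₀ : 1 ≤ k₀) (hk₀m : k₀ ≤ m)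
    (p : Fin m → Ω → ℝ) (hmeas : ∀ i, Measurable (p i))
    (hindep : iIndepFun p μ)
    -- the first m₀ - 1 coordinates are uniform on (0,1)
    (hunif : ∀ i : Fin m, (i : ℕ) < m₀ - 1 → μ.map (p i) = volume.restrict (Set.Ioo (0:ℝ) 1))
    -- the remaining coordinates are 0
    (hzero : ∀ i : Fin m, m₀ - 1 ≤ (i : ℕ) → ∀ ω, p i ω = 0)
    -- q ω gives the order statistics of the p-value family (with q ω 0 = 0)
    (q : Ω → ℕ → ℝ) (hq0 : ∀ ω, q ω 0 = 0)
    (hqmono : ∀ ω, ∀ k l, 1 ≤ k → k ≤ l → l ≤ m → q ω k ≤ q ω l)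
    (hqperm : ∀ ω, Multiset.map (fun i => p i ω) Finset.univ.val =
      Multiset.map (fun k => q ω (k + 1)) (Multiset.range m)) :
    ∫ ω, (m : ℝ) * (1 - q ω k₀) / ((m : ℝ) - k₀ + 1) ∂μ ≤ m / m₀ := by
  classical
  set n := m₀ - 1 with hn
  set z := m - n with hz
  have hnm : n ≤ m := le_trans (Nat.sub_le _ _) hm
  have hzn : z + n = m := by omega
  have hnm₀ : n + 1 = m₀ := by omega
  set S : Finset (Fin m) := Finset.univ.filter (fun i : Fin m => (i:ℕ) < n) with hS
  have hScard : S.card = n := by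
    have h1 : S.card = ∑ i : Fin m, if (i:ℕ) < n then 1 else 0 := by
      rw [hS, Finset.card_filter]
    rw [h1, Fin.sum_univ_eq_sum_range (fun k => if k < n then 1 else 0) m,
      ← Finset.card_filter]
    have h2 : (Finset.range m).filter (fun k => k < n) = Finset.range n := by
      ext k; simp only [Finset.mem_filter, Finset.mem_range]; omega
    rw [h2, Finset.card_range]
  have hSccard : Sᶜ.card = z := by
    rw [Finset.card_compl, hScard]
    simp [hz]
  -- counting function
  set N : ℝ → Ω → ℕ := fun t ω => (Finset.univ.filter (fun i => p i ω ≤ t)).card with hN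
  -- L1: order statistic characterization
  have hqle : ∀ ω t, q ω k₀ ≤ t ↔ k₀ ≤ N t ω := by
    intro ω t
    have hcount : N t ω = ((Finset.range m).filter (fun k => q ω (k+1) ≤ t)).card := by
      have h := congrArg (Multiset.countP (fun x => x ≤ t)) (hqperm ω)
      rw [Multiset.countP_map, Multiset.countP_map] at h
      simp only [hN]
      rw [Finset.card_filter, Finset.card_filter]
      simp [Finset.sum_boole, Multiset.countP_eq_card_filter] at h ⊢
      exact h
    constructor
    · intro hle
      have hsub : Finset.range k₀ ⊆ (Finset.range m).filter (fun k => q ω (k+1) ≤ t) := by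
        intro k hk
        rw [Finset.mem_range] at hk
        rw [Finset.mem_filter, Finset.mem_range]
        exact ⟨lt_of_lt_of_le hk hk₀m,
          le_trans (hqmono ω (k+1) k₀ (Nat.succ_le_succ (Nat.zero_le k)) hk hk₀m) hle⟩
      calc k₀ = (Finset.range k₀).card := (Finset.card_range k₀).symm
        _ ≤ _ := Finset.card_le_card hsub
        _ = N t ω := hcount.symm
    · intro hNk
      rw [hcount] at hNk
      have hex : ∃ k ∈ (Finset.range m).filter (fun k => q ω (k+1) ≤ t), k₀ ≤ k + 1 := by
        by_contra hcon
        push_neg at hcon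
        have hsub : (Finset.range m).filter (fun k => q ω (k+1) ≤ t) ⊆ Finset.range (k₀-1) := by
          intro k hk
          rw [Finset.mem_range]
          have := hcon k hk
          omega
        have := Finset.card_le_card hsub
        rw [Finset.card_range] at this
        omega
      obtain ⟨k, hk, hk₀k⟩ := hex
      rw [Finset.mem_filter, Finset.mem_range] at hk
      exact le_trans (hqmono ω k₀ (k+1) hk₀ hk₀k hk.1) hk.2
  -- L2: split count
  have hNsplit : ∀ ω, ∀ t : ℝ, 0 ≤ t →
      N t ω = z + (S.filter (fun i => p i ω ≤ t)).card := by
    intro ω t ht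
    simp only [hN]
    have hu : Finset.univ.filter (fun i => p i ω ≤ t)
        = S.filter (fun i => p i ω ≤ t) ∪ Sᶜ.filter (fun i => p i ω ≤ t) := by
      rw [← Finset.filter_union, Finset.union_compl]
    rw [hu, Finset.card_union_of_disjoint
      (Finset.disjoint_filter_filter disjoint_compl_right)]
    have hfc : Sᶜ.filter (fun i => p i ω ≤ t) = Sᶜ := by
      apply Finset.filter_true_of_mem
      intro i hi
      rw [Finset.mem_compl, hS, Finset.mem_filter] at hi
      push_neg at hi
      rw [hzero i (by simpa using hi (Finset.mem_univ i))]
      exact ht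
    rw [hfc, hSccard]
    ring
  -- measurability
  have hNmeas : ∀ t, Measurable (N t) := by
    intro t
    have h1 : N t = fun ω => ∑ i : Fin m, if p i ω ≤ t then 1 else 0 :=
      funext fun ω => Finset.card_filter _ _
    rw [h1]
    exact Finset.measurable_sum _ fun i _ =>
      Measurable.ite (measurableSet_le (hmeas i) measurable_const)
        measurable_const measurable_const
  have hqmeas : Measurable (fun ω => q ω k₀) := by
    apply measurable_of_Iic
    intro t
    have h1 : (fun ω => q ω k₀) ⁻¹' Set.Iic t = N t ⁻¹' Set.Ici k₀ := by
      ext ω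
      simp only [Set.mem_preimage, Set.mem_Iic, Set.mem_Ici]
      exact hqle ω t
    rw [h1]
    exact hNmeas t measurableSet_Ici
  -- a.e. uniform values in (0,1)
  have haeIoo : ∀ᵐ ω ∂μ, ∀ i : Fin m, (i:ℕ) < n → p i ω ∈ Set.Ioo (0:ℝ) 1 := by
    rw [ae_all_iff]
    intro i
    by_cases hi : (i:ℕ) < n
    · have h1 : μ (p i ⁻¹' Set.Ioo 0 1) = 1 := by
        rw [← Measure.map_apply (hmeas i) measurableSet_Ioo, hunif i hi]
        simp [Measure.restrict_apply, Real.volume_Ioo]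
      have h2 : μ (p i ⁻¹' Set.Ioo 0 1)ᶜ = 0 := by
        rw [measure_compl ((hmeas i) measurableSet_Ioo) (measure_ne_top μ _), h1,
          measure_univ, tsub_self]
      have h3 : ∀ᵐ ω ∂μ, p i ω ∈ Set.Ioo (0:ℝ) 1 := by
        rw [ae_iff]
        convert h2 using 2
        rfl
      filter_upwards [h3] with ω hω _
      exact hω
    · filter_upwards with ω hlt
      exact absurd hlt hi
  -- q k₀ is one of the p-values
  have hqval : ∀ ω, ∃ i : Fin m, p i ω = q ω k₀ := by
    intro ω
    have hmem : q ω k₀ ∈ Multiset.map (fun k => q ω (k+1)) (Multiset.range m) := by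
      rw [Multiset.mem_map]
      exact ⟨k₀ - 1, by rw [Multiset.mem_range]; omega, by congr 1; omega⟩
    rw [← hqperm ω, Multiset.mem_map] at hmem
    obtain ⟨i, _, hi⟩ := hmem
    exact ⟨i, hi⟩
  have haeq01 : ∀ᵐ ω ∂μ, q ω k₀ ∈ Set.Icc (0:ℝ) 1 := by
    filter_upwards [haeIoo] with ω hω
    obtain ⟨i, hi⟩ := hqval ω
    by_cases hiS : (i:ℕ) < n
    · have h1 := hω i hiS
      rw [hi] at h1
      exact ⟨le_of_lt h1.1, le_of_lt h1.2⟩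
    · rw [← hi, hzero i (by omega)]
      norm_num
  have hq0' : ∀ᵐ ω ∂μ, 0 ≤ q ω k₀ := haeq01.mono fun ω h => h.1
  have hint : Integrable (fun ω => q ω k₀) μ := by
    apply Integrable.mono' (integrable_const (1:ℝ)) hqmeas.aestronglyMeasurable
    filter_upwards [haeq01] with ω h
    rw [Real.norm_eq_abs, abs_le]
    exact ⟨by linarith [h.1], h.2⟩
  set I := ∫ ω, q ω k₀ ∂μ with hI
  have hI0 : 0 ≤ I := integral_nonneg_of_ae hq0'
  have hm₀R : (0:ℝ) < m₀ := by exact_mod_cast hm₀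
  have hc : (0:ℝ) < (m:ℝ) - k₀ + 1 := by
    have h1 : (k₀:ℝ) ≤ m := Nat.cast_le.2 hk₀m
    linarith
  have hsplitI : ∫ ω, (m : ℝ) * (1 - q ω k₀) / ((m : ℝ) - k₀ + 1) ∂μ
      = (m:ℝ)/((m:ℝ)-k₀+1) * (1 - I) := by
    have h1 : ∀ ω, (m : ℝ) * (1 - q ω k₀) / ((m : ℝ) - k₀ + 1)
        = (m:ℝ)/((m:ℝ)-k₀+1) * (1 - q ω k₀) := fun ω => by ring
    simp_rw [h1]
    rw [integral_const_mul, integral_sub (integrable_const 1) hint, integral_const]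
    simp [measure_univ]
    exact Or.inl hI.symm
  rw [hsplitI]
  rcases le_or_gt k₀ z with hcase | hcase
  · -- easy case: k₀ ≤ z
    have hm₀c : (m₀:ℝ) ≤ (m:ℝ) - k₀ + 1 := by
      have h1 : k₀ + m₀ ≤ m + 1 := by omega
      have h2 : (k₀:ℝ) + m₀ ≤ (m:ℝ) + 1 := by exact_mod_cast h1
      linarith
    calc (m:ℝ)/((m:ℝ)-k₀+1) * (1 - I) ≤ (m:ℝ)/((m:ℝ)-k₀+1) * 1 := by
          apply mul_le_mul_of_nonneg_left (by linarith) (by positivity)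
      _ = (m:ℝ)/((m:ℝ)-k₀+1) := mul_one _
      _ ≤ (m:ℝ)/(m₀:ℝ) := by gcongr
  · -- hard case
    set j := k₀ - z with hj
    have hj1 : 1 ≤ j := by omega
    have hjn : j ≤ n := by omega
    have hkey : (j:ℝ)/(m₀:ℝ) ≤ I := by
      have hIl : I = (∫⁻ ω, ENNReal.ofReal (q ω k₀) ∂μ).toReal := by
        rw [hI, integral_eq_lintegral_of_nonneg_ae hq0' hqmeas.aestronglyMeasurable]
      have hlayer := lintegral_eq_lintegral_meas_lt μ hq0' hqmeas.aemeasurable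
      have hfin : ∫⁻ ω, ENNReal.ofReal (q ω k₀) ∂μ ≤ 1 := by
        calc ∫⁻ ω, ENNReal.ofReal (q ω k₀) ∂μ ≤ ∫⁻ _, 1 ∂μ := by
              apply lintegral_mono_ae
              filter_upwards [haeq01] with ω h
              exact ENNReal.ofReal_le_one.2 h.2
          _ = 1 := by simp
      set 𝒯 : Finset (Finset (Fin m)) := S.powerset.filter (fun T => T.card < j) with hT𝒯
      have hsetEq : ∀ t : ℝ, 0 < t → {ω | t < q ω k₀}
          = ⋃ T ∈ 𝒯, {ω | S.filter (fun i => p i ω ≤ t) = T} := by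
        intro t ht
        ext ω
        simp only [Set.mem_setOf_eq, Set.mem_iUnion, exists_prop]
        constructor
        · intro hlt
          refine ⟨S.filter (fun i => p i ω ≤ t), ?_, rfl⟩
          rw [hT𝒯, Finset.mem_filter, Finset.mem_powerset]
          refine ⟨Finset.filter_subset _ _, ?_⟩
          by_contra hcard
          push_neg at hcard
          have hk : k₀ ≤ N t ω := by
            rw [hNsplit ω t ht.le]; omega
          exact absurd ((hqle ω t).2 hk) (not_le.2 hlt)
        · rintro ⟨T, hT, hfil⟩
          rw [hT𝒯, Finset.mem_filter] at hT
          by_contra hle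
          rw [not_lt] at hle
          have hk := (hqle ω t).1 hle
          rw [hNsplit ω t ht.le, hfil] at hk
          omega
      have hev : ∀ (t : ℝ) (T : Finset (Fin m)), T ⊆ S →
          {ω | S.filter (fun i => p i ω ≤ t) = T}
            = ⋂ i ∈ S, p i ⁻¹' (if i ∈ T then Set.Iic t else (Set.Iic t)ᶜ) := by
        intro t T hTS
        ext ω
        simp only [Set.mem_setOf_eq, Set.mem_iInter, Set.mem_preimage]
        constructor
        · intro h i hi
          have hiT : i ∈ T ↔ p i ω ≤ t := by
            rw [← h, Finset.mem_filter]
            simp [hi]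
          by_cases hT' : i ∈ T
          · simp only [if_pos hT', Set.mem_Iic]
            exact hiT.1 hT'
          · simp only [if_neg hT', Set.mem_compl_iff, Set.mem_Iic]
            exact fun hc => hT' (hiT.2 hc)
        · intro h
          apply Finset.ext
          intro i
          rw [Finset.mem_filter]
          constructor
          · rintro ⟨hiS, hpi⟩
            have h2 := h i hiS
            by_contra hiT
            rw [if_neg hiT] at h2
            exact h2 hpi
          · intro hiT
            have hiS := hTS hiT
            have h2 := h i hiS
            rw [if_pos hiT] at h2
            exact ⟨hiS, h2⟩
      have hevmeas : ∀ (t : ℝ) (T : Finset (Fin m)), T ⊆ S →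
          MeasurableSet {ω | S.filter (fun i => p i ω ≤ t) = T} := by
        intro t T hTS
        rw [hev t T hTS]
        refine MeasurableSet.iInter fun i => MeasurableSet.iInter fun _ => ?_
        by_cases hiT : i ∈ T
        · rw [if_pos hiT]; exact (hmeas i) measurableSet_Iic
        · rw [if_neg hiT]; exact (hmeas i) measurableSet_Iic.compl
      have hET : ∀ t ∈ Set.Ioo (0:ℝ) 1, ∀ T ∈ 𝒯,
          μ {ω | S.filter (fun i => p i ω ≤ t) = T}
            = ENNReal.ofReal t ^ T.card * ENNReal.ofReal (1-t) ^ (n - T.card) := by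
        intro t ht T hT
        rw [hT𝒯, Finset.mem_filter, Finset.mem_powerset] at hT
        obtain ⟨hTS, hTcard⟩ := hT
        rw [hev t T hTS]
        have hmsets : ∀ i, i ∈ S →
            MeasurableSet (if i ∈ T then Set.Iic t else (Set.Iic t)ᶜ : Set ℝ) := by
          intro i _
          by_cases hiT : i ∈ T
          · rw [if_pos hiT]; exact measurableSet_Iic
          · rw [if_neg hiT]; exact measurableSet_Iic.compl
        rw [hindep.measure_inter_preimage_eq_mul S hmsets]
        have hval1 : ∀ i ∈ S, μ (p i ⁻¹' Set.Iic t) = ENNReal.ofReal t := by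
          intro i hi
          rw [hS, Finset.mem_filter] at hi
          rw [← Measure.map_apply (hmeas i) measurableSet_Iic, hunif i hi.2,
            Measure.restrict_apply measurableSet_Iic]
          have h2 : Set.Iic t ∩ Set.Ioo 0 1 = Set.Ioc 0 t := by
            ext x
            simp only [Set.mem_inter_iff, Set.mem_Iic, Set.mem_Ioo, Set.mem_Ioc]
            constructor
            · rintro ⟨h1, h2, h3⟩; exact ⟨h2, h1⟩
            · rintro ⟨h1, h2⟩; exact ⟨h2, h1, lt_of_le_of_lt h2 ht.2⟩
          rw [h2, Real.volume_Ioc]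
          simp
        have hval2 : ∀ i ∈ S, μ (p i ⁻¹' (Set.Iic t)ᶜ) = ENNReal.ofReal (1-t) := by
          intro i hi
          rw [Set.preimage_compl, measure_compl ((hmeas i) measurableSet_Iic)
            (measure_ne_top μ _), measure_univ, hval1 i hi,
            ENNReal.ofReal_sub 1 ht.1.le, ENNReal.ofReal_one]
        have hpT : ∀ i ∈ T,
            μ (p i ⁻¹' (if i ∈ T then Set.Iic t else (Set.Iic t)ᶜ)) = ENNReal.ofReal t := by
          intro i hi
          rw [if_pos hi]
          exact hval1 i (hTS hi)
        have hpS : ∀ i ∈ S \ T,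
            μ (p i ⁻¹' (if i ∈ T then Set.Iic t else (Set.Iic t)ᶜ)) = ENNReal.ofReal (1-t) := by
          intro i hi
          rw [Finset.mem_sdiff] at hi
          rw [if_neg hi.2]
          exact hval2 i hi.1
        have hTun : S = T ∪ (S \ T) := (Finset.union_sdiff_of_subset hTS).symm
        rw [hTun, Finset.prod_union Finset.disjoint_sdiff,
          Finset.prod_congr rfl hpT, Finset.prod_congr rfl hpS, Finset.prod_const,
          Finset.prod_const, Finset.card_sdiff_of_subset hTS, hScard]
      have hμt : ∀ t ∈ Set.Ioo (0:ℝ) 1, μ {ω | t < q ω k₀}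
          = ∑ T ∈ 𝒯, ENNReal.ofReal t ^ T.card * ENNReal.ofReal (1-t) ^ (n - T.card) := by
        intro t ht
        rw [hsetEq t ht.1, measure_biUnion_finset]
        · exact Finset.sum_congr rfl fun T hT => hET t ht T hT
        · intro T hT T' hT' hne
          exact Set.disjoint_left.2 fun ω h1 h2 => hne (h1.symm.trans h2)
        · intro T hT
          rw [hT𝒯, Finset.mem_filter, Finset.mem_powerset] at hT
          exact hevmeas t T hT.1
      have hIoo : ∫⁻ t in Set.Ioo (0:ℝ) 1, μ {ω | t < q ω k₀}
          = ENNReal.ofReal ((j:ℝ)/((n:ℝ)+1)) := by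
        rw [setLIntegral_congr_fun measurableSet_Ioo hμt,
          lintegral_finset_sum]
        · rw [Finset.sum_congr rfl (fun T _ => lint_beta T.card (n - T.card))]
          have h𝒯eq : 𝒯 = (Finset.range j).biUnion (fun r => Finset.powersetCard r S) := by
            ext T
            simp only [hT𝒯, Finset.mem_filter, Finset.mem_powerset, Finset.mem_biUnion,
              Finset.mem_range, Finset.mem_powersetCard]
            constructor
            · rintro ⟨h1, h2⟩; exact ⟨T.card, h2, h1, rfl⟩
            · rintro ⟨r, hr, hsub, rfl⟩; exact ⟨hsub, hr⟩
          rw [h𝒯eq, Finset.sum_biUnion]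
          · have hinner : ∀ r ∈ Finset.range j,
                (∑ T ∈ Finset.powersetCard r S, ENNReal.ofReal
                  ((T.card.factorial * (n - T.card).factorial : ℝ)
                    / ((T.card + (n - T.card) + 1).factorial)))
                  = ENNReal.ofReal (1/((n:ℝ)+1)) := by
              intro r hr
              rw [Finset.mem_range] at hr
              have hrn : r ≤ n := by omega
              have hcongr : ∀ T ∈ Finset.powersetCard r S, ENNReal.ofReal
                  ((T.card.factorial * (n - T.card).factorial : ℝ)
                    / ((T.card + (n - T.card) + 1).factorial))
                  = ENNReal.ofReal ((r.factorial * (n - r).factorial : ℝ)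
                    / ((r + (n - r) + 1).factorial)) := by
                intro T hT
                rw [(Finset.mem_powersetCard.1 hT).2]
              rw [Finset.sum_congr rfl hcongr, Finset.sum_const,
                Finset.card_powersetCard, hScard, nsmul_eq_mul,
                ← ENNReal.ofReal_natCast, ← ENNReal.ofReal_mul (Nat.cast_nonneg _)]
              congr 1
              have hch : (n.choose r : ℝ) * (r.factorial * (n - r).factorial)
                  = n.factorial := by
                have h := Nat.choose_mul_factorial_mul_factorial hrn
                have h2 : n.choose r * (r.factorial * (n - r).factorial) = n.factorial := by
                  rw [← mul_assoc]; exact h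
                exact_mod_cast h2
              have hnr : r + (n - r) + 1 = n + 1 := by omega
              have hne : (n.factorial : ℝ) ≠ 0 := by
                exact_mod_cast (Nat.factorial_pos n).ne'
              rw [hnr]
              push_cast [Nat.factorial_succ]
              rw [← mul_div_assoc, hch, mul_comm ((n:ℝ)+1), ← div_div, div_self hne]
            rw [Finset.sum_congr rfl hinner, Finset.sum_const, Finset.card_range,
              nsmul_eq_mul, ← ENNReal.ofReal_natCast,
              ← ENNReal.ofReal_mul (Nat.cast_nonneg _), mul_one_div]
          · intro r hr r' hr' hne
            exact Finset.disjoint_left.2 fun T hT hT' =>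
              hne ((Finset.mem_powersetCard.1 hT).2.symm.trans
                (Finset.mem_powersetCard.1 hT').2)
        · intro T _
          fun_prop
      have hge : ENNReal.ofReal ((j:ℝ)/((n:ℝ)+1)) ≤ ∫⁻ ω, ENNReal.ofReal (q ω k₀) ∂μ := by
        rw [hlayer, ← hIoo]
        exact lintegral_mono_set Set.Ioo_subset_Ioi_self
      have hnetop : ∫⁻ ω, ENNReal.ofReal (q ω k₀) ∂μ ≠ ⊤ :=
        ne_top_of_le_ne_top ENNReal.one_ne_top hfin
      have hfinal := ENNReal.toReal_mono hnetop hge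
      rw [ENNReal.toReal_ofReal (by positivity)] at hfinal
      have hm₀n : ((n:ℝ)+1) = (m₀:ℝ) := by exact_mod_cast hnm₀
      calc (j:ℝ)/(m₀:ℝ) = (j:ℝ)/((n:ℝ)+1) := by rw [hm₀n]
        _ ≤ (∫⁻ ω, ENNReal.ofReal (q ω k₀) ∂μ).toReal := hfinal
        _ = I := hIl.symm
    have hceq : (m:ℝ) - k₀ + 1 = (m₀:ℝ) - j := by
      have h1 : j + m + 1 = k₀ + m₀ := by omega
      have h2 : (j:ℝ) + m + 1 = (k₀:ℝ) + m₀ := by exact_mod_cast h1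
      linarith
    have hjm₀ : (j:ℝ) < m₀ := by
      have : j < m₀ := by omega
      exact_mod_cast this
    calc (m:ℝ)/((m:ℝ)-k₀+1) * (1 - I)
        ≤ (m:ℝ)/((m:ℝ)-k₀+1) * (1 - (j:ℝ)/m₀) := by
          apply mul_le_mul_of_nonneg_left (by linarith) (by positivity)
      _ = (m:ℝ)/(m₀:ℝ) := by
          rw [hceq]
          have h1 : (m₀:ℝ) - j > 0 := by linarith
          field_simp
end

section
/- Let β : [0,∞) → [0,∞) be a non-decreasing function with ∫₀^∞ u⁻² β(u) du ≤ 1. Let p₁,…,p_m be arbitrary [0,1]-valued random variables with P(p_i ≤ u) ≤ u for all u and i ∈ H₀. Define t^{βsu}(p) = max{u ∈ [0,1] : Ĝ(p, β(u)) ≥ u/α} and R = {i : p_i ≤ β(t^{βsu}(p))}. Then FDR(R, P) ≤ α·m₀/m, regardless of the dependence structure of the p-values. -/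
open MeasureTheory Set ENNReal

/-- The β-modified step-up threshold. -/
noncomputable def tbsu (m : ℕ) (α : ℝ) (β : ℝ → ℝ) (q : Fin m → ℝ) : ℝ :=
  sSup {u | u ∈ Set.Icc (0:ℝ) 1 ∧
    u / α ≤ ((Finset.univ.filter (fun i => q i ≤ β u)).card : ℝ) / m}

lemma lint_inv_sq {t : ℝ} (ht : 0 < t) :
    ∫⁻ u in Set.Ioi t, ENNReal.ofReal ((u ^ 2)⁻¹) = ENNReal.ofReal t⁻¹ := by
  have hcong : ∀ x ∈ Set.Ioi t, x ^ (-2 : ℝ) = (x ^ 2)⁻¹ := by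
    intro x hx
    rw [Real.rpow_neg (le_of_lt (ht.trans hx)), Real.rpow_two]
  have hint : IntegrableOn (fun u : ℝ => (u ^ 2)⁻¹) (Set.Ioi t) := by
    exact (integrableOn_Ioi_rpow_of_lt (by norm_num) ht).congr_fun hcong measurableSet_Ioi
  rw [← ofReal_integral_eq_lintegral_ofReal hint ?_]
  · congr 1
    have := integral_Ioi_rpow_of_lt (by norm_num : (-2:ℝ) < -1) ht
    rw [setIntegral_congr_fun measurableSet_Ioi hcong] at this
    rw [this]; rw [show (-2:ℝ) + 1 = -1 by norm_num, Real.rpow_neg_one]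
    field_simp
  · filter_upwards [self_mem_ae_restrict measurableSet_Ioi] with x hx
    positivity

lemma lint_inv_sq_ge {t : ℝ} (ht : 0 ≤ t) :
    (ENNReal.ofReal t)⁻¹ ≤ ∫⁻ u in Set.Ioi t, ENNReal.ofReal ((u ^ 2)⁻¹) := by
  rcases eq_or_lt_of_le ht with h | h
  · rw [← h]
    simp only [ENNReal.ofReal_zero, ENNReal.inv_zero]
    rw [top_le_iff]
    apply ENNReal.eq_top_of_forall_nnreal_le
    intro r
    calc (r : ℝ≥0∞) ≤ ENNReal.ofReal ((((r:ℝ) + 1)⁻¹)⁻¹) := by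
          rw [inv_inv]
          rw [ENNReal.ofReal_add (by positivity) (by norm_num), ENNReal.ofReal_coe_nnreal]
          exact le_add_of_nonneg_right (by positivity)
      _ = ∫⁻ u in Set.Ioi (((r:ℝ) + 1)⁻¹), ENNReal.ofReal ((u ^ 2)⁻¹) :=
          (lint_inv_sq (by positivity)).symm
      _ ≤ ∫⁻ u in Set.Ioi (0:ℝ), ENNReal.ofReal ((u ^ 2)⁻¹) := by
          apply lintegral_mono_set
          exact Set.Ioi_subset_Ioi (by positivity)
  · rw [lint_inv_sq h, ENNReal.ofReal_inv_of_pos h]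

lemma tbsu_spec {m : ℕ} (hm : 0 < m) {α : ℝ} (hα : 0 < α) {β : ℝ → ℝ}
    (hβmono : MonotoneOn β (Set.Ici 0)) (q : Fin m → ℝ) :
    tbsu m α β q ∈ Set.Icc (0:ℝ) 1 ∧
      tbsu m α β q / α ≤
        ((Finset.univ.filter (fun i => q i ≤ β (tbsu m α β q))).card : ℝ) / m := by
  classical
  unfold tbsu
  set S := {u | u ∈ Set.Icc (0:ℝ) 1 ∧
    u / α ≤ ((Finset.univ.filter (fun i => q i ≤ β u)).card : ℝ) / m} with hS
  have h0 : (0:ℝ) ∈ S := by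
    refine ⟨⟨le_refl _, zero_le_one⟩, ?_⟩
    rw [zero_div]
    positivity
  have hbdd : BddAbove S := ⟨1, fun u hu => hu.1.2⟩
  have ht0 : 0 ≤ sSup S := le_csSup hbdd h0
  have ht1 : sSup S ≤ 1 := csSup_le ⟨0, h0⟩ (fun u hu => hu.1.2)
  have hmR : (0:ℝ) < m := by exact_mod_cast hm
  refine ⟨⟨ht0, ht1⟩, ?_⟩
  rw [div_le_div_iff₀ hα hmR]
  have key : ∀ u ∈ S, u ≤
      ((Finset.univ.filter (fun i => q i ≤ β (sSup S))).card : ℝ) * α / m := by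
    intro u hu
    have hut : u ≤ sSup S := le_csSup hbdd hu
    have hcard : ((Finset.univ.filter (fun i => q i ≤ β u)).card : ℝ) ≤
        ((Finset.univ.filter (fun i => q i ≤ β (sSup S))).card : ℝ) := by
      have : (Finset.univ.filter (fun i => q i ≤ β u)) ⊆
          (Finset.univ.filter (fun i => q i ≤ β (sSup S))) := by
        apply Finset.monotone_filter_right
        intro i _ hi
        exact le_trans hi (hβmono hu.1.1 ht0 hut)
      exact_mod_cast Finset.card_le_card this
    have h1 := hu.2
    rw [div_le_div_iff₀ hα hmR] at h1
    rw [le_div_iff₀ hmR]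
    exact le_trans h1 (mul_le_mul_of_nonneg_right hcard hα.le)
  have h2 := csSup_le ⟨0, h0⟩ key
  rw [le_div_iff₀ hmR] at h2
  linarith

lemma fdp_pointwise {m : ℕ} (hm : 0 < m) {α : ℝ} (hα : 0 < α) {β : ℝ → ℝ}
    (hβmono : MonotoneOn β (Set.Ici 0)) (q : Fin m → ℝ) (H₀ : Finset (Fin m)) :
    ENNReal.ofReal
        (((Finset.univ.filter (fun i => q i ≤ β (tbsu m α β q)) ∩ H₀).card : ℝ) /
          max ((Finset.univ.filter (fun i => q i ≤ β (tbsu m α β q))).card : ℝ) 1)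
      ≤ ENNReal.ofReal (α / m) * ∑ i ∈ H₀,
          ({v : ℝ | q i ≤ β v}.indicator (fun _ => (ENNReal.ofReal (tbsu m α β q))⁻¹))
            (tbsu m α β q) := by
  classical
  obtain ⟨⟨ht0, ht1⟩, hkey⟩ := tbsu_spec hm hα hβmono q
  set t := tbsu m α β q with hts
  have hmR : (0:ℝ) < m := by exact_mod_cast hm
  set a : ℕ := (Finset.univ.filter (fun i => q i ≤ β t) ∩ H₀).card with ha
  set b : ℕ := (Finset.univ.filter (fun i => q i ≤ β t)).card with hb
  have hsum : ∑ i ∈ H₀,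
      ({v : ℝ | q i ≤ β v}.indicator (fun _ => (ENNReal.ofReal t)⁻¹)) t
      = (a : ℝ≥0∞) * (ENNReal.ofReal t)⁻¹ := by
    have hind : ∀ i, ({v : ℝ | q i ≤ β v}.indicator (fun _ => (ENNReal.ofReal t)⁻¹)) t
        = if q i ≤ β t then (ENNReal.ofReal t)⁻¹ else 0 := by
      intro i; rw [Set.indicator_apply]; simp only [Set.mem_setOf_eq]
    simp_rw [hind]
    rw [← Finset.sum_filter, Finset.sum_const, ha]
    have hset : Finset.univ.filter (fun i => q i ≤ β t) ∩ H₀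
        = H₀.filter (fun i => q i ≤ β t) := by
      ext i; simp [Finset.mem_filter, Finset.mem_inter, and_comm]
    rw [hset, nsmul_eq_mul]
  rcases eq_or_lt_of_le ht0 with h0 | h0
  · -- t = 0
    rcases Nat.eq_zero_or_pos a with haz | hap
    · rw [haz]
      simp
    · obtain ⟨i, hi⟩ := Finset.card_pos.mp hap
      rw [Finset.mem_inter, Finset.mem_filter] at hi
      have hmem : t ∈ {v : ℝ | q i ≤ β v} := hi.1.2
      have hterm : ({v : ℝ | q i ≤ β v}.indicator (fun _ => (ENNReal.ofReal t)⁻¹)) t = ⊤ := by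
        rw [Set.indicator_of_mem hmem, ← h0]
        simp
      have hsum_top : ∑ i ∈ H₀,
          ({v : ℝ | q i ≤ β v}.indicator (fun _ => (ENNReal.ofReal t)⁻¹)) t = ⊤ :=
        top_le_iff.mp (hterm ▸ Finset.single_le_sum
          (f := fun j => ({v : ℝ | q j ≤ β v}.indicator (fun _ => (ENNReal.ofReal t)⁻¹)) t)
          (fun j _ => zero_le) hi.2)
      rw [hsum_top, ENNReal.mul_top (by simp only [ne_eq, ENNReal.ofReal_eq_zero, not_le]; positivity)]
      exact le_top
  · -- t > 0
    have hb_ge : (m : ℝ) * t / α ≤ (b : ℝ) := by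
      rw [div_le_div_iff₀ hα hmR] at hkey
      rw [div_le_iff₀ hα]
      linarith
    have hbpos : (0:ℝ) < b := lt_of_lt_of_le (by positivity) hb_ge
    have hb1 : (1:ℝ) ≤ (b:ℝ) := Nat.one_le_cast.mpr (Nat.cast_pos.mp hbpos)
    rw [max_eq_left hb1, hsum]
    rw [← ENNReal.ofReal_inv_of_pos h0, show ((a:ℝ≥0∞)) = ENNReal.ofReal (a:ℝ) by simp,
      ← ENNReal.ofReal_mul (by positivity), ← ENNReal.ofReal_mul (by positivity)]
    apply ENNReal.ofReal_le_ofReal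
    have h1 : (a:ℝ) / (b:ℝ) ≤ (a:ℝ) / ((m:ℝ) * t / α) :=
      div_le_div_of_nonneg_left (by positivity) (by positivity) hb_ge
    calc (a:ℝ) / (b:ℝ) ≤ (a:ℝ) / ((m:ℝ) * t / α) := h1
      _ = α / m * ((a:ℝ) * t⁻¹) := by field_simp

theorem stmt14 {Ω : Type*} [MeasurableSpace Ω] (μ : Measure Ω) [IsProbabilityMeasure μ]
    (m : ℕ) (hm : 2 ≤ m) (α : ℝ) (hα : α ∈ Set.Ioo (0:ℝ) 1)
    (β : ℝ → ℝ) (hβ0 : ∀ u, 0 ≤ u → 0 ≤ β u) (hβmono : MonotoneOn β (Set.Ici 0))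
    (hβint : IntegrableOn (fun u => β u / u ^ 2) (Set.Ioi 0))
    (hβ1 : ∫ u in Set.Ioi (0:ℝ), β u / u ^ 2 ≤ 1)
    (p : Fin m → Ω → ℝ) (hmeas : ∀ i, Measurable (p i))
    (hval : ∀ i ω, p i ω ∈ Set.Icc (0:ℝ) 1)
    (H₀ : Finset (Fin m))
    (hnull : ∀ i ∈ H₀, ∀ u ∈ Set.Icc (0:ℝ) 1, (μ {ω | p i ω ≤ u}).toReal ≤ u) :
    ∫ ω, ((Finset.univ.filter
          (fun i => p i ω ≤ β (tbsu m α β (fun j => p j ω))) ∩ H₀).card : ℝ) /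
        max ((Finset.univ.filter
          (fun i => p i ω ≤ β (tbsu m α β (fun j => p j ω)))).card : ℝ) 1 ∂μ
      ≤ α * H₀.card / m := by
  classical
  obtain ⟨hα0, hα1⟩ := hα
  have hm0 : 0 < m := lt_of_lt_of_le two_pos hm
  have hmR : (0:ℝ) < m := by exact_mod_cast hm0
  set FDP : Ω → ℝ := fun ω =>
    ((Finset.univ.filter
        (fun i => p i ω ≤ β (tbsu m α β (fun j => p j ω))) ∩ H₀).card : ℝ) /
      max ((Finset.univ.filter
        (fun i => p i ω ≤ β (tbsu m α β (fun j => p j ω)))).card : ℝ) 1 with hFDPdef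
  show ∫ ω, FDP ω ∂μ ≤ α * H₀.card / m
  have hFDPnn : ∀ ω, 0 ≤ FDP ω := fun ω =>
    div_nonneg (by positivity) (le_trans zero_le_one (le_max_right _ _))
  by_cases hsm : AEStronglyMeasurable FDP μ
  swap
  · have : ¬ Integrable FDP μ := fun h => hsm h.1
    rw [integral_undef this]
    positivity
  -- measurable case
  rw [integral_eq_lintegral_of_nonneg_ae (Filter.Eventually.of_forall hFDPnn) hsm]
  have hRHSnn : (0:ℝ) ≤ α * H₀.card / m := by positivity
  apply ENNReal.toReal_le_of_le_ofReal hRHSnn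
  -- the β used on Ioi 0, made globally monotone
  set β' : ℝ → ℝ := fun u => β (max u 0) with hβ'def
  have hβ'mono : Monotone β' := fun x y hxy =>
    hβmono (Set.mem_Ici.mpr (le_max_right _ _)) (Set.mem_Ici.mpr (le_max_right _ _)) (max_le_max hxy le_rfl)
  have hβ'meas : Measurable β' := hβ'mono.measurable
  -- the kernel
  set K : Fin m → Ω → ℝ≥0∞ := fun i ω => ∫⁻ u in Set.Ioi (0:ℝ),
    ({x : Ω × ℝ | p i x.1 ≤ β' x.2}.indicator (fun x => ENNReal.ofReal ((x.2 ^ 2)⁻¹)))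
      (ω, u) with hKdef
  have hSmeas : ∀ i, MeasurableSet {x : Ω × ℝ | p i x.1 ≤ β' x.2} :=
    fun i => measurableSet_le ((hmeas i).comp measurable_fst) (hβ'meas.comp measurable_snd)
  have hGmeas : ∀ i, Measurable fun x : Ω × ℝ =>
      ({x : Ω × ℝ | p i x.1 ≤ β' x.2}.indicator (fun x => ENNReal.ofReal ((x.2 ^ 2)⁻¹))) x :=
    fun i => Measurable.indicator (by fun_prop) (hSmeas i)
  have hKmeas : ∀ i, Measurable (K i) := fun i => (hGmeas i).lintegral_prod_right'
  -- pointwise bound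
  have hpt : ∀ ω, ENNReal.ofReal (FDP ω) ≤
      ENNReal.ofReal (α / m) * ∑ i ∈ H₀, K i ω := by
    intro ω
    set q : Fin m → ℝ := fun j => p j ω with hq
    set t : ℝ := tbsu m α β q with ht
    obtain ⟨⟨ht0, ht1⟩, -⟩ := tbsu_spec hm0 hα0 hβmono q
    refine le_trans (fdp_pointwise hm0 hα0 hβmono q H₀) ?_
    apply mul_le_mul' le_rfl
    apply Finset.sum_le_sum
    intro i _
    by_cases hqi : q i ≤ β t
    · have hmem : t ∈ {v : ℝ | q i ≤ β v} := hqi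
      rw [Set.indicator_of_mem hmem]
      calc (ENNReal.ofReal t)⁻¹
          ≤ ∫⁻ u in Set.Ioi t, ENNReal.ofReal ((u ^ 2)⁻¹) := lint_inv_sq_ge ht0
        _ = ∫⁻ u in Set.Ioi t,
            ({x : Ω × ℝ | p i x.1 ≤ β' x.2}.indicator
              (fun x => ENNReal.ofReal ((x.2 ^ 2)⁻¹))) (ω, u) := by
            apply setLIntegral_congr_fun measurableSet_Ioi
            intro u hu
            have hu0 : (0:ℝ) < u := lt_of_le_of_lt ht0 hu
            have : p i ω ≤ β' u := by
              rw [hβ'def]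
              simp only [max_eq_left hu0.le]
              exact le_trans hqi (hβmono ht0 hu0.le hu.le)
            beta_reduce
            rw [Set.indicator_of_mem
              (show (ω, u) ∈ {x : Ω × ℝ | p i x.1 ≤ β' x.2} from this)]
        _ ≤ K i ω := lintegral_mono_set (Set.Ioi_subset_Ioi ht0)
    · rw [Set.indicator_of_notMem (show t ∉ {v : ℝ | q i ≤ β v} from hqi)]
      exact zero_le
  -- integrate the bound
  calc ∫⁻ ω, ENNReal.ofReal (FDP ω) ∂μ
      ≤ ∫⁻ ω, ENNReal.ofReal (α / m) * ∑ i ∈ H₀, K i ω ∂μ := lintegral_mono hpt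
    _ = ENNReal.ofReal (α / m) * ∑ i ∈ H₀, ∫⁻ ω, K i ω ∂μ := by
        rw [lintegral_const_mul _ (Finset.measurable_sum H₀ (fun i _ => hKmeas i)),
          lintegral_finset_sum _ (fun i _ => hKmeas i)]
    _ ≤ ENNReal.ofReal (α / m) * ∑ i ∈ H₀, 1 := by
        apply mul_le_mul' le_rfl
        apply Finset.sum_le_sum
        intro i hi
        -- Tonelli
        have hswap : ∫⁻ ω, K i ω ∂μ = ∫⁻ u in Set.Ioi (0:ℝ), ∫⁻ ω,
            ({x : Ω × ℝ | p i x.1 ≤ β' x.2}.indicator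
              (fun x => ENNReal.ofReal ((x.2 ^ 2)⁻¹))) (ω, u) ∂μ := by
          exact lintegral_lintegral_swap (hGmeas i).aemeasurable
        rw [hswap]
        have hbound : ∀ u ∈ Set.Ioi (0:ℝ), (∫⁻ ω,
            ({x : Ω × ℝ | p i x.1 ≤ β' x.2}.indicator
              (fun x => ENNReal.ofReal ((x.2 ^ 2)⁻¹))) (ω, u) ∂μ)
            ≤ ENNReal.ofReal (β u / u ^ 2) := by
          intro u hu
          have hu0 : (0:ℝ) < u := hu
          have hβ'u : β' u = β u := by rw [hβ'def]; simp [max_eq_left hu0.le]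
          have heq : (fun ω => ({x : Ω × ℝ | p i x.1 ≤ β' x.2}.indicator
              (fun x => ENNReal.ofReal ((x.2 ^ 2)⁻¹))) (ω, u))
              = {ω : Ω | p i ω ≤ β' u}.indicator (fun _ => ENNReal.ofReal ((u ^ 2)⁻¹)) := by
            funext ω
            simp only [Set.indicator_apply, Set.mem_setOf_eq]
          rw [heq, lintegral_indicator_const
            (measurableSet_le (hmeas i) measurable_const)]
          have hμle : μ {ω : Ω | p i ω ≤ β' u} ≤ ENNReal.ofReal (β u) := by
            rw [hβ'u]
            by_cases hβu1 : β u ≤ 1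
            · have := hnull i hi (β u) ⟨hβ0 u hu0.le, hβu1⟩
              exact ENNReal.le_ofReal_iff_toReal_le (measure_ne_top μ _)
                (hβ0 u hu0.le) |>.mpr this
            · calc μ {ω : Ω | p i ω ≤ β u} ≤ 1 := prob_le_one
                _ = ENNReal.ofReal 1 := by simp
                _ ≤ ENNReal.ofReal (β u) := ENNReal.ofReal_le_ofReal (le_of_not_ge hβu1)
          calc ENNReal.ofReal ((u ^ 2)⁻¹) * μ {ω : Ω | p i ω ≤ β' u}
              ≤ ENNReal.ofReal ((u ^ 2)⁻¹) * ENNReal.ofReal (β u) := mul_le_mul' le_rfl hμle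
            _ = ENNReal.ofReal (β u / u ^ 2) := by
                rw [← ENNReal.ofReal_mul (by positivity)]
                congr 1
                field_simp
        calc ∫⁻ u in Set.Ioi (0:ℝ), ∫⁻ ω,
              ({x : Ω × ℝ | p i x.1 ≤ β' x.2}.indicator
                (fun x => ENNReal.ofReal ((x.2 ^ 2)⁻¹))) (ω, u) ∂μ
            ≤ ∫⁻ u in Set.Ioi (0:ℝ), ENNReal.ofReal (β u / u ^ 2) := by
              apply lintegral_mono_ae
              filter_upwards [self_mem_ae_restrict measurableSet_Ioi] with u hu
              exact hbound u hu
          _ = ENNReal.ofReal (∫ u in Set.Ioi (0:ℝ), β u / u ^ 2) := by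
              have hnn : 0 ≤ᵐ[volume.restrict (Set.Ioi (0:ℝ))] fun u => β u / u ^ 2 := by
                filter_upwards [self_mem_ae_restrict measurableSet_Ioi] with u hu
                have hu0 : (0:ℝ) < u := hu
                have := hβ0 u hu0.le
                positivity
              exact (ofReal_integral_eq_lintegral_ofReal hβint hnn).symm
          _ ≤ 1 := by
              calc ENNReal.ofReal (∫ u in Set.Ioi (0:ℝ), β u / u ^ 2)
                  ≤ ENNReal.ofReal 1 := ENNReal.ofReal_le_ofReal hβ1
                _ = 1 := by simp
    _ = ENNReal.ofReal (α * H₀.card / m) := by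
        rw [Finset.sum_const, nsmul_eq_mul, mul_one]
        rw [show ((H₀.card : ℝ≥0∞)) = ENNReal.ofReal (H₀.card : ℝ) by simp,
          ← ENNReal.ofReal_mul (by positivity)]
        congr 1
        field_simp
end

section
/- With νᵢ = (i·δ)⁻¹ where δ = 1 + 1/2 + … + 1/m, the function β(u) = Σ_{i : αi/m ≤ u} (αi/m)νᵢ satisfies β(αk/m) = δ⁻¹·αk/m for all k ∈ {1,…,m}, and ∫₀^∞ u⁻² β(u) du = 1 (recovering the Benjamini–Yekutieli correction). -/
open MeasureTheory Set

lemma aux_eq (c x : ℝ) (hx0 : 0 < x) : c / x ^ 2 = c * x ^ (-2:ℝ) := by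
  rw [show (-2:ℝ) = -((2:ℕ):ℝ) by norm_num, Real.rpow_neg hx0.le, Real.rpow_natCast]
  ring

lemma aux_integrable (a c : ℝ) (ha : 0 < a) :
    IntegrableOn (fun u : ℝ => c / u ^ 2) (Set.Ioi a) := by
  have h : IntegrableOn (fun x : ℝ => c * x ^ (-2:ℝ)) (Set.Ioi a) := (integrableOn_Ioi_rpow_of_lt (a := (-2:ℝ)) (by norm_num) ha).const_mul c
  apply h.congr_fun ?_ measurableSet_Ioi
  intro x hx
  exact (aux_eq c x (lt_trans ha hx)).symm

lemma aux_integral (a c : ℝ) (ha : 0 < a) :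
    ∫ u in Set.Ioi a, c / u ^ 2 = c / a := by
  have h := integral_Ioi_rpow_of_lt (a := (-2:ℝ)) (by norm_num) ha
  have h2 : ∫ u in Set.Ioi a, c * u ^ (-2:ℝ) = c * (-a ^ ((-2:ℝ) + 1) / ((-2:ℝ) + 1)) := by
    rw [← h, ← integral_const_mul]
  rw [show (∫ u in Set.Ioi a, c / u ^ 2) = ∫ u in Set.Ioi a, c * u ^ (-2:ℝ) from ?_, h2]
  · rw [show ((-2:ℝ) + 1) = -1 by norm_num, Real.rpow_neg_one]
    field_simp
  · apply setIntegral_congr_fun measurableSet_Ioi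
    intro x hx
    exact aux_eq c x (lt_trans ha hx)

theorem stmt16 (m : ℕ) (hm : 1 ≤ m) (α : ℝ) (hα : α ∈ Set.Ioo (0:ℝ) 1)
    (δ : ℝ) (hδ : δ = ∑ j ∈ Finset.Icc 1 m, (1 : ℝ) / j)
    (β : ℝ → ℝ)
    (hβ : ∀ u : ℝ, β u =
      ∑ i ∈ (Finset.Icc 1 m).filter (fun i : ℕ => α * (i : ℝ) / m ≤ u),
        α * (i : ℝ) / m * (1 / ((i : ℝ) * δ))) :
    (∀ k, 1 ≤ k → k ≤ m → β (α * k / m) = δ⁻¹ * (α * k / m)) ∧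
    ∫ u in Set.Ioi (0:ℝ), β u / u ^ 2 = 1 := by
  obtain ⟨hα0, hα1⟩ := hα
  have hm0 : (0:ℝ) < m := by exact_mod_cast hm
  have hδ0 : (0:ℝ) < δ := by
    rw [hδ]
    apply Finset.sum_pos
    · intro j hj
      have : (0:ℕ) < j := (Finset.mem_Icc.1 hj).1
      positivity
    · exact ⟨1, Finset.mem_Icc.2 ⟨le_refl 1, hm⟩⟩
  constructor
  · intro k hk1 hkm
    rw [hβ]
    have hfil : (Finset.Icc 1 m).filter (fun i : ℕ => α * (i : ℝ) / m ≤ α * k / m)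
        = Finset.Icc 1 k := by
      ext i
      simp only [Finset.mem_filter, Finset.mem_Icc]
      constructor
      · rintro ⟨⟨h1, h2⟩, h3⟩
        refine ⟨h1, ?_⟩
        have : (i:ℝ) ≤ k := by
          have := (div_le_div_iff_of_pos_right hm0).1 h3
          exact le_of_mul_le_mul_left this hα0
        exact_mod_cast this
      · rintro ⟨h1, h2⟩
        refine ⟨⟨h1, le_trans h2 hkm⟩, ?_⟩
        have : (i:ℝ) ≤ k := by exact_mod_cast h2
        gcongr
    rw [hfil]
    have : ∀ i ∈ Finset.Icc 1 k, α * (i:ℝ) / m * (1 / ((i:ℝ) * δ)) = α / (m * δ) := by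
      intro i hi
      have hi0 : (0:ℝ) < i := by exact_mod_cast (Finset.mem_Icc.1 hi).1
      field_simp
    rw [Finset.sum_congr rfl this, Finset.sum_const, Nat.card_Icc]
    have hk0 : (0:ℝ) < k := by exact_mod_cast hk1
    simp only [Nat.add_sub_cancel, nsmul_eq_mul]
    field_simp
  · have key : ∀ u : ℝ, β u / u ^ 2 = ∑ i ∈ Finset.Icc 1 m,
        (Set.Ici (α * (i:ℝ) / m)).indicator
          (fun u => (α * (i:ℝ) / m * (1 / ((i:ℝ) * δ))) / u ^ 2) u := by
      intro u
      rw [hβ, Finset.sum_filter, Finset.sum_div]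
      apply Finset.sum_congr rfl
      intro i _
      rw [Set.indicator_apply]
      simp only [Set.mem_Ici]
      split_ifs with h
      · rfl
      · simp
    simp only [key]
    have haux : ∀ i ∈ Finset.Icc 1 m, (0:ℝ) < α * (i:ℝ) / m := by
      intro i hi
      have : (0:ℝ) < i := by exact_mod_cast (Finset.mem_Icc.1 hi).1
      positivity
    have hIciIoi : ∀ i ∈ Finset.Icc 1 m,
        (volume.restrict (Set.Ioi (0:ℝ))).restrict (Set.Ici (α * (i:ℝ) / m))
          = volume.restrict (Set.Ici (α * (i:ℝ) / m)) := by
      intro i hi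
      rw [Measure.restrict_restrict measurableSet_Ici, Set.inter_eq_left.2]
      exact fun x hx => lt_of_lt_of_le (haux i hi) hx
    have hint : ∀ i ∈ Finset.Icc 1 m, Integrable
        ((Set.Ici (α * (i:ℝ) / m)).indicator
          (fun u => (α * (i:ℝ) / m * (1 / ((i:ℝ) * δ))) / u ^ 2))
        (volume.restrict (Set.Ioi (0:ℝ))) := by
      intro i hi
      rw [integrable_indicator_iff measurableSet_Ici]
      unfold IntegrableOn
      rw [hIciIoi i hi]
      rw [← IntegrableOn, integrableOn_Ici_iff_integrableOn_Ioi]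
      exact aux_integrable _ _ (haux i hi)
    rw [integral_finset_sum _ hint]
    have hterm : ∀ i ∈ Finset.Icc 1 m,
        (∫ u in Set.Ioi (0:ℝ), (Set.Ici (α * (i:ℝ) / m)).indicator
          (fun u => (α * (i:ℝ) / m * (1 / ((i:ℝ) * δ))) / u ^ 2) u) = 1 / ((i:ℝ) * δ) := by
      intro i hi
      rw [integral_indicator measurableSet_Ici]
      rw [show (∫ u in Set.Ici (α * (i:ℝ) / m),
          (α * (i:ℝ) / m * (1 / ((i:ℝ) * δ))) / u ^ 2 ∂(volume.restrict (Set.Ioi (0:ℝ))))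
        = ∫ u in Set.Ici (α * (i:ℝ) / m),
          (α * (i:ℝ) / m * (1 / ((i:ℝ) * δ))) / u ^ 2 from by rw [hIciIoi i hi]]
      rw [MeasureTheory.integral_Ici_eq_integral_Ioi, aux_integral _ _ (haux i hi)]
      have h1 : (0:ℝ) < α * (i:ℝ) / m := haux i hi
      rw [mul_comm (α * (i:ℝ) / m), mul_div_assoc, div_self h1.ne', mul_one]
    rw [Finset.sum_congr rfl hterm]
    have : ∑ i ∈ Finset.Icc 1 m, 1 / ((i:ℝ) * δ) = δ⁻¹ * ∑ i ∈ Finset.Icc 1 m, (1:ℝ)/i := by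
      rw [Finset.mul_sum]
      apply Finset.sum_congr rfl
      intro i _
      rw [one_div, one_div, mul_inv, inv_mul_eq_div, div_eq_mul_inv, mul_comm]
    rw [this, ← hδ, inv_mul_cancel₀ (ne_of_gt hδ0)]
end

section
/- Let H = {1,…,m}, k ≥ 1, and let {A_C}_{C ⊆ H} be non-decreasing in C. Define φ(C) = ⋃_{I ⊆ H, |I| = k−1} A_{C ∪ I}. Suppose H₀ ⊆ H satisfies |H₀ \ A_{H₀}| ≤ k−1 (i.e., there exists I₀ with |I₀| = k−1 and H₀ ⊆ A_{H₀} ∪ I₀). Then φ is non-decreasing, the recursion C₀ = H, C_{j+1} = φ(C_j) is decreasing and stabilizes at a fixed point Ĉ, and the final set satisfies |Ĉᶜ ∩ H₀| ≤ k−1. -/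
theorem stmt18 (m k : ℕ) (hk : 1 ≤ k)
    (A : Finset (Fin m) → Finset (Fin m))
    (hA : ∀ C C', C ⊆ C' → A C ⊆ A C')
    (H₀ : Finset (Fin m)) (h0 : (H₀ \ A H₀).card ≤ k - 1)
    (φ : Finset (Fin m) → Finset (Fin m))
    (hφ : ∀ C, φ C = (Finset.powersetCard (k - 1) Finset.univ).sup (fun I => A (C ∪ I)))
    (C : ℕ → Finset (Fin m)) (hC0 : C 0 = Finset.univ)
    (hCrec : ∀ j, C (j + 1) = φ (C j)) :
    (∀ C₁ C₂, C₁ ⊆ C₂ → φ C₁ ⊆ φ C₂) ∧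
    (∀ j, C (j + 1) ⊆ C j) ∧
    (∃ j, ∀ j', j ≤ j' → C j' = C j) ∧
    ∀ j, (((C j)ᶜ : Finset (Fin m)) ∩ H₀).card ≤ k - 1 := by
  have hmono : ∀ C₁ C₂, C₁ ⊆ C₂ → φ C₁ ⊆ φ C₂ := by
    intro C₁ C₂ h
    rw [hφ, hφ, ← Finset.le_iff_subset]
    apply Finset.sup_mono_fun
    intro I _
    exact hA _ _ (Finset.union_subset_union h (subset_refl I))
  have hdec : ∀ j, C (j + 1) ⊆ C j := by
    intro j
    induction j with
    | zero => rw [hC0]; exact Finset.subset_univ _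
    | succ n ih =>
      rw [hCrec (n + 1), hCrec n]
      exact hmono _ _ (by rw [← hCrec n]; exact ih)
  have hstab : ∃ j, ∀ j', j ≤ j' → C j' = C j := by
    have hex : ∃ n, C (n + 1) = C n := by
      by_contra hcon
      push_neg at hcon
      have key : ∀ n, (C n).card + n ≤ (C 0).card := by
        intro n
        induction n with
        | zero => simp
        | succ n ih =>
          have hlt : (C (n + 1)).card < (C n).card :=
            Finset.card_lt_card (HasSubset.Subset.ssubset_of_ne (hdec n) (hcon n))
          omega
      have := key ((C 0).card + 1); omega
    obtain ⟨n, hn⟩ := hex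
    refine ⟨n, ?_⟩
    intro j' hj'
    induction j' with
    | zero => rw [Nat.le_zero.mp hj']
    | succ p ih =>
      rcases Nat.lt_or_ge n (p + 1) with h | h
      · have hp := ih (Nat.lt_succ_iff.mp h)
        rw [hCrec p, hp, ← hCrec n, hn]
      · rw [le_antisymm hj' h]
  refine ⟨hmono, hdec, hstab, ?_⟩
  by_cases hm : m ≤ k - 1
  · intro j
    calc (((C j)ᶜ : Finset (Fin m)) ∩ H₀).card
        ≤ (Finset.univ : Finset (Fin m)).card :=
          Finset.card_le_card (Finset.subset_univ _)
      _ = m := by simp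
      _ ≤ k - 1 := hm
  · push_neg at hm
    have hcu : k - 1 ≤ (Finset.univ : Finset (Fin m)).card := by
      simp; omega
    obtain ⟨I₀, hsub, _, hcard⟩ :=
      Finset.exists_subsuperset_card_eq (Finset.subset_univ (H₀ \ A H₀)) h0 hcu
    have hinv : ∀ j, H₀ ⊆ C j ∪ I₀ := by
      intro j
      induction j with
      | zero => rw [hC0]; intro x _; simp
      | succ n ih =>
        have h1 : H₀ ⊆ A H₀ ∪ I₀ := by
          intro x hx
          by_cases hxA : x ∈ A H₀
          · exact Finset.mem_union_left _ hxA
          · exact Finset.mem_union_right _ (hsub (Finset.mem_sdiff.mpr ⟨hx, hxA⟩))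
        have h2 : A H₀ ⊆ φ (C n) := by
          rw [hφ]
          have hmem : I₀ ∈ Finset.powersetCard (k - 1) (Finset.univ : Finset (Fin m)) := by
            rw [Finset.mem_powersetCard]
            exact ⟨Finset.subset_univ _, hcard⟩
          exact (hA _ _ ih).trans
            (Finset.le_iff_subset.mp (Finset.le_sup (f := fun I => A (C n ∪ I)) hmem))
        rw [hCrec n]
        exact h1.trans (Finset.union_subset_union h2 subset_rfl)
    intro j
    have hss : ((C j)ᶜ : Finset (Fin m)) ∩ H₀ ⊆ I₀ := by
      intro x hx
      obtain ⟨hx1, hx2⟩ := Finset.mem_inter.mp hx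
      rcases Finset.mem_union.mp (hinv j hx2) with h | h
      · exact absurd h (Finset.mem_compl.mp hx1)
      · exact h
    calc (((C j)ᶜ : Finset (Fin m)) ∩ H₀).card ≤ I₀.card := Finset.card_le_card hss
      _ = k - 1 := hcard
end
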